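/- arXiv:1609.09531 — 9 statements merged into one kernel-verified Lean document; each statement's English description precedes it below -/
import Mathlib

section
/- Let F be a field of characteristic p, G a finite abelian group of exponent dividing p^r, and M the augmentation ideal of F[G]. Then M = {a ∈ F[G] : a^{p^r} = 0}. -/
/-- Let `F` be a field of characteristic `p`, `G` a finite abelian group of exponent dividing
`p^r`, and `M` the augmentation ideal of `F[G]`.  Then `M = {a ∈ F[G] : a^(p^r) = 0}`. -/
theorem augmentation_ideal_eq_nilpotents (F : Type*) [Field F] (p r : ℕ) (hp : p.Prime)
    (hr : 1 ≤ r) [CharP F p] (G : Type*) [AddCommGroup G] [Fintype G]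
    (hG : ∀ g : G, (p ^ r) • g = 0) (a : AddMonoidAlgebra F G) :
    (∑ g : G, a.coeff g = 0) ↔ a ^ (p ^ r) = 0 := by
  classical
  haveI : Fact p.Prime := ⟨hp⟩
  haveI : CharP (AddMonoidAlgebra F G) p :=
    charP_of_injective_algebraMap (algebraMap F (AddMonoidAlgebra F G)).injective p
  have ha : a = ∑ g : G, AddMonoidAlgebra.single g (a.coeff g) := by
    ext g'
    rw [AddMonoidAlgebra.coeff_sum, Finsupp.finset_sum_apply]
    simp [Finsupp.single_apply]
  have key : a ^ (p ^ r) = AddMonoidAlgebra.single (0 : G) ((∑ g : G, a.coeff g) ^ (p ^ r)) := by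
    conv_lhs => rw [ha]
    rw [sum_pow_char_pow, sum_pow_char_pow]
    simp only [AddMonoidAlgebra.single_pow, hG]
    exact (map_sum (AddMonoidAlgebra.singleAddHom (0 : G)) _ _).symm
  rw [key, AddMonoidAlgebra.single_eq_zero,
    pow_eq_zero_iff (pow_ne_zero r hp.pos.ne')]
end

section
/- Let F be a field of characteristic p and G the additive group of the Galois ring GR(p^r, m), generated as a Z/p^r-module by 1, α, ..., α^{m−1}. Then in F[G], the product ∏_{l=0}^{m−1} (X^{α^l} − 1)^{p^r − 1} equals ∑_{g ∈ G} X^g. -/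
lemma poly_geom (F : Type*) [Field F] (p : ℕ) (hp : p.Prime) [CharP F p] (r : ℕ) :
    (Polynomial.X - 1 : Polynomial F) ^ (p ^ r - 1) =
      ∑ k ∈ Finset.range (p ^ r), Polynomial.X ^ k := by
  have hX : (Polynomial.X - 1 : Polynomial F) ≠ 0 := by
    intro h
    have h1 := Polynomial.natDegree_X_sub_C (1 : F)
    rw [Polynomial.C_1, h] at h1
    simp at h1
  have hpos : 0 < p ^ r := pow_pos hp.pos r
  apply mul_left_cancel₀ hX
  have h1 : (Polynomial.X - 1 : Polynomial F) * (Polynomial.X - 1) ^ (p ^ r - 1)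
      = (Polynomial.X - 1) ^ (p ^ r) := by
    rw [← pow_succ']
    congr 1
    omega
  haveI := hp.one_lt
  haveI : Fact p.Prime := ⟨hp⟩
  rw [h1, sub_pow_char_pow, one_pow]
  rw [mul_comm, geom_sum_mul]

lemma single_geom (F : Type*) [Field F] (p : ℕ) (hp : p.Prime) [CharP F p] (r m : ℕ)
    (e : Fin m → ZMod (p ^ r)) :
    ((AddMonoidAlgebra.single e (1 : F)) - 1) ^ (p ^ r - 1) =
      ∑ k ∈ Finset.range (p ^ r), AddMonoidAlgebra.single (k • e) (1 : F) := by
  have := congrArg (Polynomial.aeval (AddMonoidAlgebra.single e (1 : F) :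
      AddMonoidAlgebra F (Fin m → ZMod (p ^ r)))) (poly_geom F p hp r)
  simpa [AddMonoidAlgebra.single_pow] using this

/-- Let `F` be a field of characteristic `p` and `G` the additive group of the Galois ring
`GR(p^r, m)`, i.e. the free `ZMod (p^r)`-module on the basis `1, α, …, α^(m-1)` (modelled as
`Fin m → ZMod (p^r)` with `α^l` the `l`-th standard basis vector).  Then in `F[G]`,
`∏_{l=0}^{m-1} (X^(α^l) - 1)^(p^r - 1) = ∑_{g ∈ G} X^g`. -/
theorem prod_basis_pow_eq_sum_all (F : Type*) [Field F] (p r m : ℕ) (hp : p.Prime)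
    (hr : 1 ≤ r) (hm : 1 ≤ m) [CharP F p] [NeZero (p ^ r)] :
    (∏ l : Fin m,
        (AddMonoidAlgebra.single (Pi.single l (1 : ZMod (p ^ r)) : Fin m → ZMod (p ^ r))
            (1 : F) - 1) ^ (p ^ r - 1)) =
      ∑ g : Fin m → ZMod (p ^ r), AddMonoidAlgebra.single g (1 : F) := by
  have step1 : ∀ l : Fin m,
      (AddMonoidAlgebra.single (Pi.single l (1 : ZMod (p ^ r)) : Fin m → ZMod (p ^ r))
          (1 : F) - 1) ^ (p ^ r - 1)
        = ∑ c : ZMod (p ^ r),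
            AddMonoidAlgebra.single (Pi.single l c : Fin m → ZMod (p ^ r)) (1 : F) := by
    intro l
    rw [single_geom F p hp r m]
    refine Finset.sum_nbij' (fun k => (k : ZMod (p ^ r))) (fun c => c.val)
      (fun a _ => Finset.mem_univ _) (fun c _ => Finset.mem_range.2 (ZMod.val_lt c))
      (fun a ha => ZMod.val_cast_of_lt (Finset.mem_range.1 ha))
      (fun c _ => ZMod.natCast_zmod_val c) (fun k _ => ?_)
    congr 1
    ext j
    rw [Pi.smul_apply]
    by_cases hj : j = l
    · subst hj
      rw [Pi.single_eq_same, Pi.single_eq_same, nsmul_eq_mul, mul_one]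
    · rw [Pi.single_eq_of_ne hj, Pi.single_eq_of_ne hj, smul_zero]
  rw [Finset.prod_congr rfl (fun l _ => step1 l)]
  rw [Finset.prod_univ_sum]
  rw [Fintype.piFinset_univ]
  refine Finset.sum_congr rfl fun g _ => ?_
  rw [AddMonoidAlgebra.prod_single]
  simp [Finset.univ_sum_single]
end

section
/- Let F = F_{p^r} and G the additive group of GR(p^r, m) with Z_{p^r}-basis 1, α, ..., α^{m−1}. For i ∈ {0, ..., p^{rm}−1} with p^r-adic expansion i = ∑_{l=0}^{m−1} i_l p^{lr}, set V_i = ∏_{l=0}^{m−1}(X^{α^l} − 1)^{i_l}. Then {V_i : 0 ≤ i ≤ p^{rm} − 1} is an F-linear basis of the group algebra F[G]. -/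
/-- Let `F = F_{p^r}` and `G` the additive group of `GR(p^r, m)` (modelled as the free
`ZMod (p^r)`-module `Fin m → ZMod (p^r)`, with `α^l` the `l`-th standard basis vector).
For `0 ≤ i ≤ p^(rm) - 1` with `p^r`-adic digits `i_l`, set
`V i = ∏_l (X^(α^l) - 1)^(i_l)`.  Then `{V i : 0 ≤ i ≤ p^(rm) - 1}` is an `F`-linear basis
of the group algebra `F[G]`. -/
theorem jennings_basis_galois_ring (p r m : ℕ) (hp : p.Prime) (hr : 1 ≤ r) (hm : 1 ≤ m)
    [NeZero (p ^ r)] (F : Type*) [Field F] [Fintype F] (hF : Fintype.card F = p ^ r)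
    (V : ℕ → AddMonoidAlgebra F (Fin m → ZMod (p ^ r)))
    (hV : ∀ i : ℕ, V i = ∏ l : Fin m,
        (AddMonoidAlgebra.single (Pi.single l (1 : ZMod (p ^ r)) : Fin m → ZMod (p ^ r))
            (1 : F) - 1) ^ (i / p ^ (r * (l : ℕ)) % p ^ r)) :
    ∃ b : Module.Basis (Fin (p ^ (r * m))) F (AddMonoidAlgebra F (Fin m → ZMod (p ^ r))),
      ∀ i : Fin (p ^ (r * m)), b i = V i := by
  classical
  set Z : Fin m → AddMonoidAlgebra F (Fin m → ZMod (p ^ r)) := fun l =>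
    AddMonoidAlgebra.single (Pi.single l (1 : ZMod (p ^ r)) : Fin m → ZMod (p ^ r)) (1 : F)
    with hZ
  -- product of singles
  have key : ∀ (s : Finset (Fin m)) (a : Fin m → (Fin m → ZMod (p ^ r))),
      (∏ l ∈ s, AddMonoidAlgebra.single (a l) (1 : F)) =
        AddMonoidAlgebra.single (∑ l ∈ s, a l) (1 : F) := by
    intro s a
    induction s using Finset.induction_on with
    | empty => simp [AddMonoidAlgebra.one_def]
    | insert _ _ h ih =>
        rw [Finset.prod_insert h, Finset.sum_insert h, ih,
          AddMonoidAlgebra.single_mul_single, one_mul]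
  -- single g 1 as a product of powers
  have hsingle : ∀ g : Fin m → ZMod (p ^ r),
      AddMonoidAlgebra.single g (1 : F) = ∏ l, Z l ^ (g l).val := by
    intro g
    have h1 : ∀ l : Fin m, Z l ^ (g l).val =
        AddMonoidAlgebra.single
          ((g l).val • Pi.single l (1 : ZMod (p ^ r)) : Fin m → ZMod (p ^ r)) (1 : F) := by
      intro l
      rw [hZ]
      rw [AddMonoidAlgebra.single_pow, one_pow]
    simp_rw [h1]
    rw [key]
    congr 1
    funext x
    simp only [Finset.sum_apply, Pi.smul_apply, Pi.single_apply, smul_ite, smul_zero]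
    rw [Finset.sum_ite_eq Finset.univ x (fun l => (g l).val • (1 : ZMod (p ^ r)))]
    simp [nsmul_eq_mul, mul_one, ZMod.natCast_val, ZMod.cast_id]
  -- binomial expansion
  have binom : ∀ (x : AddMonoidAlgebra F (Fin m → ZMod (p ^ r))) (n : ℕ), x ^ n =
      ∑ k ∈ Finset.range (n + 1),
        (x - 1) ^ k * ((n.choose k : ℕ) : AddMonoidAlgebra F (Fin m → ZMod (p ^ r))) := by
    intro x n
    conv_lhs => rw [show x = (x - 1) + 1 by ring]
    rw [add_pow]
    simp
  set S := Submodule.span F (Set.range fun i : Fin (p ^ (r * m)) => V i) with hS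
  -- products of (Z l - 1)^(κ l) with digits < p^r are in S
  have hW : ∀ κ : Fin m → ℕ, (∀ l, κ l < p ^ r) → (∏ l, (Z l - 1) ^ κ l) ∈ S := by
    intro κ hκ
    set κ' : Fin m → Fin (p ^ r) := fun l => ⟨κ l, hκ l⟩ with hκ'
    set i : Fin ((p ^ r) ^ m) := finFunctionFinEquiv κ' with hi
    have hilt : (i : ℕ) < p ^ (r * m) := by
      rw [pow_mul]; exact i.isLt
    refine Submodule.subset_span ⟨⟨(i : ℕ), hilt⟩, ?_⟩
    show V (i : ℕ) = _
    rw [hV]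
    refine Finset.prod_congr rfl fun l _ => ?_
    rw [hZ]
    congr 1
    have h2 : ((finFunctionFinEquiv.symm i) l : ℕ) = (i : ℕ) / (p ^ r) ^ (l : ℕ) % p ^ r := rfl
    have h := congrFun (finFunctionFinEquiv.symm_apply_apply κ') l
    rw [hi] at h2 ⊢
    rw [pow_mul, ← h2, h]
  -- products of Z l ^ n l with n l < p ^ r are in S
  have hZn : ∀ n : Fin m → ℕ, (∀ l, n l < p ^ r) → (∏ l, Z l ^ n l) ∈ S := by
    intro n hn
    have expand : (∏ l, Z l ^ n l) =
        ∑ κ ∈ Fintype.piFinset (fun l : Fin m => Finset.range (n l + 1)),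
          ∏ l, ((Z l - 1) ^ κ l *
            (((n l).choose (κ l) : ℕ) : AddMonoidAlgebra F (Fin m → ZMod (p ^ r)))) :=
      calc (∏ l, Z l ^ n l)
          = ∏ l, ∑ k ∈ Finset.range (n l + 1), (Z l - 1) ^ k *
              (((n l).choose k : ℕ) : AddMonoidAlgebra F (Fin m → ZMod (p ^ r))) :=
            Finset.prod_congr rfl fun l _ => binom (Z l) (n l)
        _ = _ := Finset.prod_univ_sum _ _
    rw [expand]
    refine Submodule.sum_mem _ fun κ hκmem => ?_
    rw [Finset.prod_mul_distrib, ← Nat.cast_prod]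
    have hcast : ((∏ l, (n l).choose (κ l) : ℕ) : AddMonoidAlgebra F (Fin m → ZMod (p ^ r)))
        = algebraMap F _ ((∏ l, (n l).choose (κ l) : ℕ) : F) := by
      rw [map_natCast]
    rw [hcast, mul_comm, ← Algebra.smul_def]
    refine Submodule.smul_mem _ _ (hW κ fun l => ?_)
    have hl := Fintype.mem_piFinset.mp hκmem l
    exact lt_of_lt_of_le (Finset.mem_range.mp hl) (hn l)
  -- singles are in S
  have hsingle_mem : ∀ g : Fin m → ZMod (p ^ r), AddMonoidAlgebra.single g (1 : F) ∈ S := by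
    intro g
    rw [hsingle g]
    exact hZn _ fun l => ZMod.val_lt _
  -- span is everything
  have htop : ⊤ ≤ S := by
    intro x _
    induction x using AddMonoidAlgebra.induction_on with
    | of g =>
        have hof : (AddMonoidAlgebra.of F (Fin m → ZMod (p ^ r)) (Multiplicative.ofAdd g)) =
            AddMonoidAlgebra.single g (1 : F) := rfl
        rw [hof]; exact hsingle_mem g
    | add f g hf hg => exact Submodule.add_mem _ (hf Submodule.mem_top) (hg Submodule.mem_top)
    | smul c f hf => exact Submodule.smul_mem _ c (hf Submodule.mem_top)
  -- dimension count
  have hcardG : Fintype.card (Fin m → ZMod (p ^ r)) = p ^ (r * m) := by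
    simp [ZMod.card, ← pow_mul]
  have hcard : Fintype.card (Fin (p ^ (r * m))) = Module.finrank F
      (AddMonoidAlgebra F (Fin m → ZMod (p ^ r))) := by
    rw [Fintype.card_fin, ← hcardG]
    exact (Module.finrank_eq_card_basis
      (AddMonoidAlgebra.basis _ _ :
        Module.Basis (Fin m → ZMod (p ^ r)) F (AddMonoidAlgebra F (Fin m → ZMod (p ^ r))))).symm
  exact ⟨basisOfTopLeSpanOfCardEqFinrank (fun i : Fin (p ^ (r * m)) => V i) htop hcard,
    fun i => by rw [coe_basisOfTopLeSpanOfCardEqFinrank]⟩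
end

section
/- With notation as above, the set B_1 = {V_i : 1 ≤ i ≤ p^{rm} − 1} (i.e., those V_i with p^r-weight ω_{p^r}(i) ≥ 1) is an F-linear basis of the augmentation ideal M of F[G]. -/
namespace JenningsAux

open Finset AddMonoidAlgebra

variable {F : Type*} [Field F] {q m : ℕ} [NeZero q]

noncomputable def W (F : Type*) [Field F] (q m : ℕ) [NeZero q] (g : Fin m → ZMod q) :
    AddMonoidAlgebra F (Fin m → ZMod q) :=
  ∏ l : Fin m, (single (Pi.single l (1 : ZMod q)) (1 : F) - 1) ^ (g l).val

def Nv (g : Fin m → ZMod q) : ℕ := ∑ l : Fin m, (g l).val * q ^ (l : ℕ)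

lemma sum_pred_pow (hq : 1 ≤ q) : ∀ m : ℕ, ∑ l : Fin m, (q - 1) * q ^ (l : ℕ) = q ^ m - 1 := by
  intro m
  induction m with
  | zero => simp
  | succ m ih =>
    rw [Fin.sum_univ_castSucc]
    simp only [Fin.coe_castSucc, Fin.val_last, ih]
    have ha : 1 ≤ q ^ m := Nat.one_le_pow _ _ hq
    have h1 : (q - 1) * q ^ m = q * q ^ m - q ^ m := by
      rw [Nat.sub_mul, one_mul]
    have h2 : q ^ m ≤ q * q ^ m := Nat.le_mul_of_pos_left _ hq
    rw [h1, pow_succ, mul_comm (q ^ m) q]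
    omega

lemma Nv_lt (g : Fin m → ZMod q) : Nv g < q ^ m := by
  have hq : 1 ≤ q := Nat.one_le_iff_ne_zero.mpr (NeZero.ne q)
  have h1 : Nv g ≤ q ^ m - 1 := by
    rw [← sum_pred_pow hq m]
    refine Finset.sum_le_sum fun l _ => Nat.mul_le_mul_right _ ?_
    have := ZMod.val_lt (g l)
    omega
  have := Nat.one_le_pow m q hq
  omega

lemma Nv_eq_zero {g : Fin m → ZMod q} (h : Nv g = 0) : g = 0 := by
  have hq : 0 < q := Nat.pos_of_ne_zero (NeZero.ne q)
  funext l
  have hl : (g l).val * q ^ (l : ℕ) = 0 :=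
    (Finset.sum_eq_zero_iff.mp h) l (mem_univ l)
  have : (g l).val = 0 := by
    have : 0 < q ^ (l : ℕ) := Nat.pow_pos hq
    rcases Nat.mul_eq_zero.mp hl with h' | h'
    · exact h'
    · omega
  exact (ZMod.val_eq_zero _).mp this

lemma sum_digits (hq : 1 < q) (m i : ℕ) :
    ∑ l : Fin m, i / q ^ (l : ℕ) % q * q ^ (l : ℕ) = i % q ^ m := by
  induction m with
  | zero => simp [Nat.mod_one]
  | succ m ih =>
    rw [Fin.sum_univ_castSucc]
    simp only [Fin.coe_castSucc, Fin.val_last, ih]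
    have key : i % q ^ (m + 1) = q ^ m * (i / q ^ m % q) + i % q ^ m := by
      have h1 : q ^ m * (i / q ^ m) % (q ^ m * q) = q ^ m * (i / q ^ m % q) :=
        Nat.mul_mod_mul_left _ _ _
      have h2 : i % q ^ m < q ^ m := Nat.mod_lt _ (Nat.pow_pos (by omega))
      have h3 : i / q ^ m % q < q := Nat.mod_lt _ (by omega)
      have h4 : q ^ m * (i / q ^ m % q) + i % q ^ m < q ^ m * q := by
        calc q ^ m * (i / q ^ m % q) + i % q ^ m
            < q ^ m * (i / q ^ m % q) + q ^ m := by omega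
          _ = q ^ m * (i / q ^ m % q + 1) := by ring
          _ ≤ q ^ m * q := Nat.mul_le_mul_left _ (by omega)
      calc i % q ^ (m + 1) = (q ^ m * (i / q ^ m) + i % q ^ m) % (q ^ m * q) := by
            rw [Nat.div_add_mod, pow_succ]
          _ = (q ^ m * (i / q ^ m) % (q ^ m * q) + i % q ^ m % (q ^ m * q)) % (q ^ m * q) := by
            rw [Nat.add_mod]
          _ = (q ^ m * (i / q ^ m % q) + i % q ^ m) % (q ^ m * q) := by
            rw [h1, Nat.mod_eq_of_lt (lt_of_lt_of_le h2 (Nat.le_mul_of_pos_right _ (by omega)))]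
          _ = q ^ m * (i / q ^ m % q) + i % q ^ m := Nat.mod_eq_of_lt h4
    rw [key]; ring

def dig (q : ℕ) [NeZero q] (m : ℕ) (i : ℕ) : Fin m → ZMod q :=
  fun l => ((i / q ^ (l : ℕ) % q : ℕ) : ZMod q)

lemma dig_val (hq : 1 < q) (i : ℕ) (l : Fin m) :
    (dig q m i l).val = i / q ^ (l : ℕ) % q :=
  ZMod.val_cast_of_lt (Nat.mod_lt _ (by omega))

lemma Nv_dig (hq : 1 < q) (i : ℕ) (hi : i < q ^ m) : Nv (dig q m i) = i := by
  unfold Nv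
  have : ∀ l : Fin m, (dig q m i l).val * q ^ (l : ℕ) = i / q ^ (l : ℕ) % q * q ^ (l : ℕ) :=
    fun l => by rw [dig_val hq]
  rw [Finset.sum_congr rfl fun l _ => this l, sum_digits hq, Nat.mod_eq_of_lt hi]

lemma dig_Nv (hq : 1 < q) (g : Fin m → ZMod q) : dig q m (Nv g) = g := by
  have hcard : Fintype.card (Fin (q ^ m)) = Fintype.card (Fin m → ZMod q) := by
    simp [ZMod.card]
  let f : Fin (q ^ m) → (Fin m → ZMod q) := fun i => dig q m i
  let e : (Fin m → ZMod q) → Fin (q ^ m) := fun g => ⟨Nv g, Nv_lt g⟩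
  have hef : ∀ i, e (f i) = i := fun i => by
    simp only [e, f, Fin.ext_iff, Nv_dig hq _ i.2]
  have hinj : Function.Injective f := fun a b hab => by
    rw [← hef a, ← hef b, hab]
  have hsurj : Function.Surjective f :=
    ((Fintype.bijective_iff_injective_and_card f).mpr ⟨hinj, hcard⟩).surjective
  obtain ⟨i, rfl⟩ := hsurj g
  rw [show Nv (f i) = (i : ℕ) from Nv_dig hq _ i.2]



noncomputable def T (F : Type*) [Field F] (q m : ℕ) [NeZero q] (n : ℕ) :
    Submodule F (AddMonoidAlgebra F (Fin m → ZMod q)) :=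
  Submodule.span F {x | ∃ h : Fin m → ZMod q, Nv h < n ∧ x = single h 1}

lemma single_mem_T {h : Fin m → ZMod q} {n : ℕ} (hn : Nv h < n) :
    (single h 1 : AddMonoidAlgebra F (Fin m → ZMod q)) ∈ T F q m n :=
  Submodule.subset_span ⟨h, hn, rfl⟩

lemma Nv_add_single_le (h : Fin m → ZMod q) (l : Fin m) :
    Nv (h + Pi.single l 1) ≤ Nv h + q ^ (l : ℕ) := by
  have hkey : ∀ k : Fin m, (((h + Pi.single l 1 : Fin m → ZMod q)) k).val * q ^ (k : ℕ) ≤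
      ((h k).val + if k = l then 1 else 0) * q ^ (k : ℕ) := by
    intro k
    by_cases hk : k = l
    · subst hk
      rw [if_pos rfl]
      simp only [Pi.add_apply, Pi.single_eq_same]
      refine Nat.mul_le_mul_right _ ?_
      have h1 : (1 : ZMod q).val ≤ 1 := by
        rw [← Nat.cast_one, ZMod.val_natCast]; exact Nat.mod_le 1 q
      have := ZMod.val_add_le (h k) 1
      omega
    · simp [Pi.single_eq_of_ne hk, hk]
  calc Nv (h + Pi.single l 1)
      ≤ ∑ k : Fin m, ((h k).val + if k = l then 1 else 0) * q ^ (k : ℕ) :=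
        Finset.sum_le_sum fun k _ => hkey k
    _ = Nv h + q ^ (l : ℕ) := by
        simp only [add_mul, Finset.sum_add_distrib, ite_mul, one_mul, zero_mul]
        simp [Nv]

lemma T_mul {n : ℕ} (l : Fin m) {x : AddMonoidAlgebra F (Fin m → ZMod q)}
    (hx : x ∈ T F q m n) :
    x * (single (Pi.single l (1 : ZMod q)) (1 : F) - 1) ∈ T F q m (n + q ^ (l : ℕ)) := by
  have hle : T F q m n ≤ (T F q m (n + q ^ (l : ℕ))).comap
      (LinearMap.mulRight F (single (Pi.single l (1 : ZMod q)) (1 : F) - 1)) := by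
    rw [T, Submodule.span_le]
    rintro x ⟨h, hh, rfl⟩
    simp only [Set.mem_setOf_eq, SetLike.mem_coe, Submodule.mem_comap,
      LinearMap.mulRight_apply]
    have hexp : single h (1 : F) * (single (Pi.single l (1 : ZMod q)) (1 : F) - 1) =
        single (h + Pi.single l 1) 1 - single h 1 := by
      rw [mul_sub, mul_one, single_mul_single, mul_one]
    rw [hexp]
    have h1 : Nv (h + Pi.single l 1) < n + q ^ (l : ℕ) :=
      lt_of_le_of_lt (Nv_add_single_le h l) (Nat.add_lt_add_right hh _)
    have h2 : Nv h < n + q ^ (l : ℕ) := lt_of_lt_of_le hh (Nat.le_add_right _ _)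
    exact sub_mem (single_mem_T h1) (single_mem_T h2)
  exact hle hx

lemma W_zero : W F q m (0 : Fin m → ZMod q) = 1 := by
  simp [W]

lemma W_key (g : Fin m → ZMod q) :
    W F q m g - single g 1 ∈ T F q m (Nv g) := by
  suffices H : ∀ n : ℕ, ∀ g : Fin m → ZMod q, Nv g = n →
      W F q m g - single g 1 ∈ T F q m (Nv g) from H _ g rfl
  intro n
  induction n using Nat.strong_induction_on with
  | _ n ih =>
    intro g hg
    subst hg
    by_cases hg0 : g = 0
    · subst hg0
      rw [W_zero, AddMonoidAlgebra.one_def, sub_self]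
      exact zero_mem _
    · obtain ⟨l, hl0⟩ := Function.ne_iff.mp hg0
      have hl : g l ≠ 0 := by simpa using hl0
      set a := (g l).val with ha
      have ha1 : 1 ≤ a := by
        have hv := (ZMod.val_eq_zero (g l)).not.mpr hl
        omega
      have haq : a < q := ZMod.val_lt (g l)
      set g' := Function.update g l (g l - 1) with hg'
      have hsub : (g l - 1).val = a - 1 := by
        have hcast : g l - 1 = ((a - 1 : ℕ) : ZMod q) := by
          have hgl : ((a : ℕ) : ZMod q) = g l := by
            rw [ha, ZMod.natCast_val, ZMod.cast_id]
          rw [Nat.cast_sub ha1, hgl, Nat.cast_one]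
        rw [hcast]
        exact ZMod.val_cast_of_lt (by omega)
      have hval' : (g' l).val = a - 1 := by
        rw [hg', Function.update_self, hsub]
      have hsum : g' + Pi.single l 1 = g := by
        funext k
        by_cases hk : k = l
        · subst hk
          simp [hg', Function.update_self]
        · simp [hg', Function.update_of_ne hk, Pi.single_eq_of_ne hk]
      have hq0 : 0 < q ^ (l : ℕ) :=
        Nat.pow_pos (Nat.pos_of_ne_zero (NeZero.ne q))
      have hNv : Nv g' + q ^ (l : ℕ) = Nv g := by
        unfold Nv
        rw [← Finset.add_sum_erase _ _ (Finset.mem_univ l),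
          ← Finset.add_sum_erase _ (fun k : Fin m => (g k).val * q ^ (k : ℕ)) (Finset.mem_univ l)]
        have hS : ∑ k ∈ Finset.univ.erase l, (g' k).val * q ^ (k : ℕ) =
            ∑ k ∈ Finset.univ.erase l, (g k).val * q ^ (k : ℕ) :=
          Finset.sum_congr rfl fun k hk => by
            rw [hg', Function.update_of_ne (Finset.ne_of_mem_erase hk)]
        rw [hS, hval', ← ha]
        have hmul : (a - 1) * q ^ (l : ℕ) + q ^ (l : ℕ) = a * q ^ (l : ℕ) := by
          calc (a - 1) * q ^ (l : ℕ) + q ^ (l : ℕ) = (a - 1 + 1) * q ^ (l : ℕ) := by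
                rw [add_one_mul]
            _ = a * q ^ (l : ℕ) := by rw [show a - 1 + 1 = a from by omega]
        omega
      have hNvlt : Nv g' < Nv g := by omega
      have e1 : W F q m g = (single (Pi.single l (1 : ZMod q)) (1 : F) - 1) ^ a *
          ∏ k ∈ Finset.univ.erase l,
            (single (Pi.single k (1 : ZMod q)) (1 : F) - 1) ^ (g k).val := by
        simp only [W]
        exact (Finset.mul_prod_erase _ _ (Finset.mem_univ l)).symm
      have e2 : W F q m g' = (single (Pi.single l (1 : ZMod q)) (1 : F) - 1) ^ (a - 1) *
          ∏ k ∈ Finset.univ.erase l,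
            (single (Pi.single k (1 : ZMod q)) (1 : F) - 1) ^ (g k).val := by
        simp only [W]
        rw [← Finset.mul_prod_erase Finset.univ
          (fun k : Fin m =>
            (single (Pi.single k (1 : ZMod q) : Fin m → ZMod q) (1 : F) - 1) ^ (g' k).val)
          (Finset.mem_univ l), hval']
        congr 1
        exact Finset.prod_congr rfl fun k hk => by
          rw [hg', Function.update_of_ne (Finset.ne_of_mem_erase hk)]
      have hWmul : W F q m g =
          W F q m g' * (single (Pi.single l (1 : ZMod q)) (1 : F) - 1) := by
        rw [e1, e2, mul_right_comm, ← pow_succ, show a - 1 + 1 = a from by omega]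
      have ht := ih (Nv g') hNvlt g' rfl
      have hmul2 : (single g' (1 : F)) *
          (single (Pi.single l (1 : ZMod q) : Fin m → ZMod q) (1 : F) - 1) =
          single g 1 - single g' 1 := by
        rw [mul_sub, mul_one, single_mul_single, mul_one, hsum]
      have hdecomp : W F q m g - single g 1 =
          (W F q m g' - single g' 1) * (single (Pi.single l (1 : ZMod q)) (1 : F) - 1)
            - single g' 1 := by
        rw [hWmul, sub_mul, hmul2]
        ring
      rw [hdecomp]
      refine sub_mem ?_ (single_mem_T hNvlt)
      have := T_mul l ht
      rwa [hNv] at this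

lemma single_mem_span (g : Fin m → ZMod q) :
    (single g 1 : AddMonoidAlgebra F (Fin m → ZMod q)) ∈
      Submodule.span F (Set.range (W F q m)) := by
  suffices H : ∀ n : ℕ, ∀ g : Fin m → ZMod q, Nv g = n →
      (single g 1 : AddMonoidAlgebra F (Fin m → ZMod q)) ∈
        Submodule.span F (Set.range (W F q m)) from H _ g rfl
  intro n
  induction n using Nat.strong_induction_on with
  | _ n ih =>
    intro g hg
    subst hg
    have hT : T F q m (Nv g) ≤ Submodule.span F (Set.range (W F q m)) := by
      rw [T, Submodule.span_le]
      rintro x ⟨h, hh, rfl⟩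
      exact ih (Nv h) hh h rfl
    have := sub_mem (Submodule.subset_span (Set.mem_range_self g)) (hT (W_key g))
    simpa using this

lemma top_le_span :
    (⊤ : Submodule F (AddMonoidAlgebra F (Fin m → ZMod q))) ≤
      Submodule.span F (Set.range (W F q m)) := by
  intro x _
  rw [← AddMonoidAlgebra.sum_coeff_single x, Finsupp.sum]
  refine Submodule.sum_mem _ fun g _ => ?_
  have hx : (single g (x.coeff g) : AddMonoidAlgebra F (Fin m → ZMod q)) =
      x.coeff g • single g (1 : F) := by
    rw [AddMonoidAlgebra.smul_single, smul_eq_mul, mul_one]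
  rw [hx]
  exact Submodule.smul_mem _ _ (single_mem_span g)

noncomputable def Wbasis (F : Type*) [Field F] (q m : ℕ) [NeZero q] :
    Module.Basis (Fin m → ZMod q) F (AddMonoidAlgebra F (Fin m → ZMod q)) :=
  basisOfTopLeSpanOfCardEqFinrank (W F q m) top_le_span
    (by exact ((AddMonoidAlgebra.coeffLinearEquiv F).finrank_eq.trans (Module.finrank_finsupp_self F)).symm)

lemma Wbasis_coe : ⇑(Wbasis F q m) = W F q m :=
  coe_basisOfTopLeSpanOfCardEqFinrank _ _ _

noncomputable def eps (F : Type*) [Field F] (q m : ℕ) [NeZero q] :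
    AddMonoidAlgebra F (Fin m → ZMod q) →ₐ[F] F :=
  AddMonoidAlgebra.lift F F (Fin m → ZMod q) 1

lemma eps_single (g : Fin m → ZMod q) (c : F) : eps F q m (single g c) = c := by
  simp [eps, AddMonoidAlgebra.lift_single]

lemma eps_eq_sum (x : AddMonoidAlgebra F (Fin m → ZMod q)) :
    eps F q m x = ∑ g : Fin m → ZMod q, x.coeff g := by
  conv_lhs => rw [← AddMonoidAlgebra.sum_coeff_single x]
  rw [map_finsuppSum]
  rw [Finsupp.sum]
  rw [Finset.sum_congr rfl fun g _ => eps_single g (x.coeff g)]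
  exact Finset.sum_subset (Finset.subset_univ _)
    fun g _ hg => Finsupp.notMem_support_iff.mp hg

lemma eps_W_ne (g : Fin m → ZMod q) (hg : g ≠ 0) : eps F q m (W F q m g) = 0 := by
  obtain ⟨l, hl⟩ := Function.ne_iff.mp hg
  unfold W
  rw [map_prod]
  refine Finset.prod_eq_zero (Finset.mem_univ l) ?_
  rw [map_pow, map_sub, map_one, eps_single, sub_self]
  refine zero_pow ?_
  have hl' : g l ≠ 0 := by simpa using hl
  exact (ZMod.val_eq_zero (g l)).not.mpr hl'

end JenningsAux


/-- With `F = F_{p^r}` and `G` the additive group of `GR(p^r, m)` (modelled as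
`Fin m → ZMod (p ^ r)`), the set `B₁ = {V i : 1 ≤ i ≤ p^(rm) - 1}` (those `V i` of
`p^r`-weight at least `1`) is an `F`-linear basis of the augmentation ideal `M` of `F[G]`. -/
theorem jennings_basis_augmentation_ideal (p r m : ℕ) (hp : p.Prime) (hr : 1 ≤ r)
    (hm : 1 ≤ m) [NeZero (p ^ r)] (F : Type*) [Field F] [Fintype F]
    (hF : Fintype.card F = p ^ r)
    (V : ℕ → AddMonoidAlgebra F (Fin m → ZMod (p ^ r)))
    (hV : ∀ i : ℕ, V i = ∏ l : Fin m,
        (AddMonoidAlgebra.single (Pi.single l (1 : ZMod (p ^ r)) : Fin m → ZMod (p ^ r))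
            (1 : F) - 1) ^ (i / p ^ (r * (l : ℕ)) % p ^ r))
    (M : Submodule F (AddMonoidAlgebra F (Fin m → ZMod (p ^ r))))
    (hM : ∀ a : AddMonoidAlgebra F (Fin m → ZMod (p ^ r)),
      a ∈ M ↔ ∑ g : Fin m → ZMod (p ^ r), a.coeff g = 0) :
    LinearIndependent F (fun i : Finset.Icc 1 (p ^ (r * m) - 1) => V i) ∧
      Submodule.span F (V '' Finset.Icc 1 (p ^ (r * m) - 1)) = M := by
  classical
  have hq : 1 < p ^ r := Nat.one_lt_pow (by omega) hp.one_lt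
  have hqm : p ^ (r * m) = (p ^ r) ^ m := by rw [← pow_mul]
  have hVW : ∀ i : ℕ, V i = JenningsAux.W F (p ^ r) m (JenningsAux.dig (p ^ r) m i) := by
    intro i
    rw [hV i]
    simp only [JenningsAux.W]
    refine Finset.prod_congr rfl fun l _ => ?_
    rw [JenningsAux.dig_val hq, show p ^ (r * (l : ℕ)) = (p ^ r) ^ (l : ℕ) from by
      rw [← pow_mul]]
  have hmem : ∀ i : ℕ, i ∈ Finset.Icc 1 (p ^ (r * m) - 1) → 1 ≤ i ∧ i < (p ^ r) ^ m := by
    intro i hi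
    rw [Finset.mem_Icc, hqm] at hi
    have hpow : 1 ≤ (p ^ r) ^ m := Nat.one_le_pow _ _ (by omega)
    omega
  set b := JenningsAux.Wbasis F (p ^ r) m with hb
  have hbco : ⇑b = JenningsAux.W F (p ^ r) m := JenningsAux.Wbasis_coe
  constructor
  · have hinj : Function.Injective
        (fun i : Finset.Icc 1 (p ^ (r * m) - 1) => JenningsAux.dig (p ^ r) m (i : ℕ)) := by
      intro i j hij
      have hi := hmem i i.2
      have hj := hmem j j.2
      have hNv := congrArg JenningsAux.Nv hij
      rw [JenningsAux.Nv_dig hq _ hi.2, JenningsAux.Nv_dig hq _ hj.2] at hNv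
      exact Subtype.ext hNv
    have heq : (fun i : Finset.Icc 1 (p ^ (r * m) - 1) => V i) =
        (⇑b ∘ fun i : Finset.Icc 1 (p ^ (r * m) - 1) => JenningsAux.dig (p ^ r) m (i : ℕ)) := by
      funext i
      simp [hVW, hbco, Function.comp]
    rw [heq]
    exact b.linearIndependent.comp _ hinj
  · have himg : V '' ↑(Finset.Icc 1 (p ^ (r * m) - 1)) =
        JenningsAux.W F (p ^ r) m '' {g : Fin m → ZMod (p ^ r) | g ≠ 0} := by
      ext x
      constructor
      · rintro ⟨i, hi, rfl⟩
        have hi' := hmem i (Finset.mem_coe.mp hi)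
        refine ⟨JenningsAux.dig (p ^ r) m i, ?_, (hVW i).symm⟩
        intro h0
        have hNi := JenningsAux.Nv_dig hq i hi'.2
        rw [h0] at hNi
        have hz : JenningsAux.Nv (0 : Fin m → ZMod (p ^ r)) = 0 := by
          simp [JenningsAux.Nv]
        omega
      · rintro ⟨g, hg, rfl⟩
        refine ⟨JenningsAux.Nv g, ?_, ?_⟩
        · rw [Finset.mem_coe, Finset.mem_Icc, hqm]
          have h1 : JenningsAux.Nv g < (p ^ r) ^ m := JenningsAux.Nv_lt g
          have h2 : JenningsAux.Nv g ≠ 0 := fun h => hg (JenningsAux.Nv_eq_zero h)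
          omega
        · rw [hVW, JenningsAux.dig_Nv hq]
    rw [himg]
    apply le_antisymm
    · rw [Submodule.span_le]
      rintro x ⟨g, hg, rfl⟩
      rw [SetLike.mem_coe, hM, ← JenningsAux.eps_eq_sum]
      exact JenningsAux.eps_W_ne g hg
    · intro a ha
      rw [hM] at ha
      have hea : JenningsAux.eps F (p ^ r) m a = 0 := by
        rw [JenningsAux.eps_eq_sum]; exact ha
      have hrepr := b.sum_repr a
      have h0 : b.repr a 0 = 0 := by
        have happ := congrArg (JenningsAux.eps F (p ^ r) m) hrepr
        rw [map_sum] at happ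
        have hterm : ∀ g : Fin m → ZMod (p ^ r), g ∈ Finset.univ → g ≠ 0 →
            JenningsAux.eps F (p ^ r) m (b.repr a g • b g) = 0 := by
          intro g _ hg
          rw [map_smul, hbco, JenningsAux.eps_W_ne g hg, smul_eq_mul, mul_zero]
        have hsum : ∑ g : Fin m → ZMod (p ^ r),
            JenningsAux.eps F (p ^ r) m (b.repr a g • b g) = b.repr a 0 := by
          rw [Finset.sum_eq_single_of_mem 0 (Finset.mem_univ _) hterm, map_smul, hbco,
            JenningsAux.W_zero, map_one, smul_eq_mul, mul_one]
        rw [hsum, hea] at happ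
        exact happ
      rw [← hrepr]
      refine Submodule.sum_mem _ fun g _ => ?_
      by_cases hg : g = 0
      · subst hg
        rw [h0, zero_smul]
        exact zero_mem _
      · exact Submodule.smul_mem _ _
          (Submodule.subset_span ⟨g, hg, (congrFun hbco g).symm⟩)
end

section
/- With notation as above, for each t with 1 ≤ t ≤ m(p^r − 1), the set B_t = {V_i : ω_{p^r}(i) ≥ t} is an F-linear basis of M^t, the t-th power of the radical M of F[G]. -/
open Finset

lemma jennings_digit_lemma (q : ℕ) (hq : 2 ≤ q) (m : ℕ) (d : ℕ → ℕ)
    (hd : ∀ l, l < m → d l < q) :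
    (∑ l ∈ range m, d l * q ^ l) < q ^ m ∧
      ∀ l, l < m → (∑ l' ∈ range m, d l' * q ^ l') / q ^ l % q = d l := by
  have hq0 : 0 < q := by omega
  induction m with
  | zero => simp
  | succ n ih =>
    have ihn := ih (fun l hl => hd l (by omega))
    set S := ∑ l' ∈ range n, d l' * q ^ l' with hS
    have hsum : ∑ l' ∈ range (n+1), d l' * q ^ l' = S + d n * q ^ n := by
      rw [Finset.sum_range_succ]
    constructor
    · rw [hsum]
      have h1 : S < q ^ n := ihn.1
      have h2 : d n ≤ q - 1 := by have := hd n (by omega); omega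
      have h3 : d n * q ^ n ≤ (q - 1) * q ^ n := Nat.mul_le_mul_right _ h2
      have h5 : 0 < q ^ n := pow_pos hq0 n
      calc S + d n * q ^ n < q ^ n + (q-1) * q^n := by omega
        _ = q * q ^ n := by
            have : q ^ n + (q-1) * q^n = (1 + (q-1)) * q ^ n := by ring
            rw [this]; congr 1; omega
        _ = q ^ (n+1) := by ring
    · intro l hl
      rw [hsum]
      rcases Nat.lt_or_ge l n with hln | hln
      · have hdiv : (S + d n * q ^ n) / q ^ l = S / q ^ l + d n * q ^ (n - l) := by
          have : d n * q ^ n = d n * q ^ (n - l) * q ^ l := by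
            rw [mul_assoc, ← pow_add]; congr 2; omega
          rw [this, Nat.add_mul_div_right _ _ (pow_pos hq0 l)]
        rw [hdiv]
        have : d n * q ^ (n - l) = q * (d n * q ^ (n - l - 1)) := by
          have h7 : q ^ (n-l) = q * q ^ (n - l - 1) := by
            rw [← pow_succ']
            congr 1; omega
          rw [h7]; ring
        rw [this, Nat.add_mul_mod_self_left]
        exact ihn.2 l hln
      · have hln' : l = n := by omega
        subst hln'
        have : (S + d l * q ^ l) / q ^ l = d l := by
          rw [Nat.add_mul_div_right _ _ (pow_pos hq0 l), Nat.div_eq_of_lt ihn.1, zero_add]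
        rw [this, Nat.mod_eq_of_lt (hd l (by omega))]

set_option maxHeartbeats 2000000 in
theorem jennings_aux (p r m : ℕ) (hp : p.Prime) (hr : 1 ≤ r) (hm : 1 ≤ m)
    [NeZero (p ^ r)] (F : Type*) [Field F] [CharP F p]
    (ω : ℕ → ℕ) (hω : ∀ i, ω i = ∑ l ∈ Finset.range m, i / p ^ (r * l) % p ^ r)
    (V : ℕ → AddMonoidAlgebra F (Fin m → ZMod (p ^ r)))
    (hV : ∀ i : ℕ, V i = ∏ l : Fin m,
        (AddMonoidAlgebra.single (Pi.single l (1 : ZMod (p ^ r)) : Fin m → ZMod (p ^ r))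
            (1 : F) - 1) ^ (i / p ^ (r * (l : ℕ)) % p ^ r))
    (M : Ideal (AddMonoidAlgebra F (Fin m → ZMod (p ^ r))))
    (hM : ∀ a : AddMonoidAlgebra F (Fin m → ZMod (p ^ r)),
      a ∈ M ↔ ∑ g : Fin m → ZMod (p ^ r), a.coeff g = 0)
    (t : ℕ) :
    LinearIndependent F
        (fun i : {i : ℕ // i < p ^ (r * m) ∧ t ≤ ω i} => V i) ∧
      Submodule.span F {x | ∃ i : ℕ, i < p ^ (r * m) ∧ t ≤ ω i ∧ x = V i} =
        Submodule.restrictScalars F (M ^ t : Ideal _) := by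
  classical
  haveI : Fact p.Prime := ⟨hp⟩
  haveI : CharP (AddMonoidAlgebra F (Fin m → ZMod (p ^ r))) p :=
    charP_of_injective_algebraMap
      (algebraMap F (AddMonoidAlgebra F (Fin m → ZMod (p ^ r)))).injective p
  have hq2 : 2 ≤ p ^ r := hp.two_le.trans (Nat.le_self_pow (by omega) p)
  have hq0 : 0 < p ^ r := by omega
  set X : Fin m → AddMonoidAlgebra F (Fin m → ZMod (p ^ r)) :=
    fun l => AddMonoidAlgebra.single (Pi.single l (1 : ZMod (p ^ r))) (1 : F) - 1 with hXdef
  set dig : ℕ → ℕ → ℕ := fun i l => i / p ^ (r * l) % p ^ r with hdig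
  have hdiglt : ∀ i l, dig i l < p ^ r := fun i l => Nat.mod_lt _ hq0
  have hV'' : ∀ i, V i = ∏ l : Fin m, X l ^ dig i (l : ℕ) := hV
  have hω'' : ∀ i, ω i = ∑ l ∈ range m, dig i l := hω
  set W : ℕ → Submodule F (AddMonoidAlgebra F (Fin m → ZMod (p ^ r))) :=
    fun s => Submodule.span F {x | ∃ i : ℕ, i < p ^ (r * m) ∧ s ≤ ω i ∧ x = V i} with hWdef
  -- X l ^ (p^r) = 0
  have hXq : ∀ l : Fin m, X l ^ p ^ r = 0 := by
    intro l
    have h1 : X l + 1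
        = AddMonoidAlgebra.single (Pi.single l (1 : ZMod (p ^ r)) : Fin m → ZMod (p ^ r)) (1 : F) := by
      simp [hXdef]
    have h3 : (AddMonoidAlgebra.single (Pi.single l (1 : ZMod (p ^ r)) : Fin m → ZMod (p ^ r))
        (1 : F)) ^ p ^ r = 1 := by
      rw [AddMonoidAlgebra.single_pow]
      have hz : (p ^ r) • (Pi.single l (1 : ZMod (p ^ r)) : Fin m → ZMod (p ^ r)) = 0 := by
        ext j
        by_cases hj : j = l <;>
          simp [hj, Pi.single_apply, ZMod.natCast_self]
      rw [hz, one_pow]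
      rfl
    have h2 : (X l + 1) ^ p ^ r = X l ^ p ^ r + 1 := by
      rw [add_pow_char_pow, one_pow]
    have h4 : X l ^ p ^ r + 1 = 0 + 1 := by
      rw [zero_add, ← h2, h1, h3]
    exact add_right_cancel h4
  -- basic values
  have hqm : (p ^ r) ^ m = p ^ (r * m) := (pow_mul p r m).symm
  have hV0 : V 0 = 1 := by
    rw [hV'']
    have : ∀ l : Fin m, dig 0 (l : ℕ) = 0 := fun l => by simp [hdig]
    simp [this]
  -- digit helpers
  have hKdig : ∀ (d : ℕ → ℕ), (∀ l, l < m → d l < p ^ r) → ∀ l : ℕ, l < m →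
      dig (∑ l' ∈ range m, d l' * (p ^ r) ^ l') l = d l := by
    intro d hd l hl
    have := (jennings_digit_lemma (p ^ r) hq2 m d hd).2 l hl
    rw [hdig]
    simpa [pow_mul] using this
  have hKlt : ∀ (d : ℕ → ℕ), (∀ l, l < m → d l < p ^ r) →
      (∑ l' ∈ range m, d l' * (p ^ r) ^ l') < p ^ (r * m) := by
    intro d hd
    rw [← hqm]
    exact (jennings_digit_lemma (p ^ r) hq2 m d hd).1
  have hKV : ∀ (d : ℕ → ℕ), (∀ l, l < m → d l < p ^ r) →
      V (∑ l' ∈ range m, d l' * (p ^ r) ^ l') = ∏ l : Fin m, X l ^ d (l : ℕ) := by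
    intro d hd
    rw [hV'']
    exact Finset.prod_congr rfl fun l _ => by rw [hKdig d hd (l : ℕ) l.isLt]
  have hKω : ∀ (d : ℕ → ℕ), (∀ l, l < m → d l < p ^ r) →
      ω (∑ l' ∈ range m, d l' * (p ^ r) ^ l') = ∑ l ∈ range m, d l := by
    intro d hd
    rw [hω'']
    exact Finset.sum_congr rfl fun l hl => hKdig d hd l (Finset.mem_range.mp hl)
  -- product lemma
  have hprodW : ∀ i j : ℕ, V i * V j ∈ W (ω i + ω j) := by
    intro i j
    have hVij : V i * V j = ∏ l : Fin m, X l ^ (dig i (l : ℕ) + dig j (l : ℕ)) := by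
      rw [hV'' i, hV'' j, ← Finset.prod_mul_distrib]
      exact Finset.prod_congr rfl fun l _ => (pow_add _ _ _).symm
    by_cases hc : ∀ l, l < m → dig i l + dig j l < p ^ r
    · set d : ℕ → ℕ := fun l => dig i l + dig j l with hd_def
      set k := ∑ l' ∈ range m, d l' * (p ^ r) ^ l' with hk
      have h5 : V i * V j = V k := by rw [hVij, hKV d hc]
      rw [h5]
      apply Submodule.subset_span
      refine ⟨k, hKlt d hc, ?_, rfl⟩
      rw [hKω d hc, hω'' i, hω'' j, ← Finset.sum_add_distrib]
    · push_neg at hc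
      obtain ⟨l0, hl0m, hl0⟩ := hc
      have hzero : V i * V j = 0 := by
        rw [hVij]
        apply Finset.prod_eq_zero (Finset.mem_univ (⟨l0, hl0m⟩ : Fin m))
        have heq : dig i l0 + dig j l0 = p ^ r + (dig i l0 + dig j l0 - p ^ r) := by omega
        rw [heq, pow_add, hXq, zero_mul]
      rw [hzero]
      exact Submodule.zero_mem _
  -- monotonicity and multiplicativity of W
  have hWmono : ∀ s s' : ℕ, s ≤ s' → W s' ≤ W s := by
    intro s s' h
    apply Submodule.span_mono
    rintro x ⟨i, h1, h2, rfl⟩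
    exact ⟨i, h1, le_trans h h2, rfl⟩
  have hWmul : ∀ (s s' : ℕ) (x y : AddMonoidAlgebra F (Fin m → ZMod (p ^ r))),
      x ∈ W s → y ∈ W s' → x * y ∈ W (s + s') := by
    intro s s' x y hx hy
    have hle : W s * W s' ≤ W (s + s') := by
      rw [hWdef]
      simp only
      rw [Submodule.span_mul_span]
      apply Submodule.span_le.mpr
      rintro z hz
      rw [Set.mem_mul] at hz
      obtain ⟨u, ⟨i, hi1, hi2, rfl⟩, v, ⟨j, hj1, hj2, rfl⟩, rfl⟩ := hz
      exact hWmono _ _ (add_le_add hi2 hj2) (hprodW i j)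
    exact hle (Submodule.mul_mem_mul hx hy)
  -- X l ∈ W 1
  have hXW : ∀ l : Fin m, X l ∈ W 1 := by
    intro l
    set d : ℕ → ℕ := fun l' => if l' = (l : ℕ) then 1 else 0 with hd_def
    have hd : ∀ l', l' < m → d l' < p ^ r := by
      intro l' _
      have : d l' ≤ 1 := by
        simp only [hd_def]
        split <;> omega
      omega
    have hVl : V (∑ l' ∈ range m, d l' * (p ^ r) ^ l') = X l := by
      rw [hKV d hd]
      rw [Finset.prod_eq_single l]
      · simp [hd_def]
      · intro b _ hb
        have : d (b : ℕ) = 0 := by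
          rw [hd_def]
          simp only [ite_eq_right_iff]
          intro hbl
          exact absurd (Fin.ext hbl) hb
        rw [this, pow_zero]
      · intro h
        exact absurd (Finset.mem_univ l) h
    have hωl : ω (∑ l' ∈ range m, d l' * (p ^ r) ^ l') = 1 := by
      rw [hKω d hd, hd_def]
      rw [Finset.sum_ite_eq' (range m) (l : ℕ) (fun _ => 1)]
      simp [l.isLt]
    rw [← hVl]
    exact Submodule.subset_span ⟨_, hKlt d hd, le_of_eq hωl.symm, rfl⟩
  -- (X l + 1)^n - 1 ∈ W 1
  have hXpow : ∀ (l : Fin m) (n : ℕ), (X l + 1) ^ n - 1 ∈ W 1 := by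
    intro l n
    induction n with
    | zero => simp
    | succ n ih =>
      have hid : (X l + 1) ^ (n + 1) - 1
          = ((X l + 1) ^ n - 1) + (((X l + 1) ^ n - 1) * X l + X l) := by ring
      rw [hid]
      exact add_mem ih
        (add_mem (hWmono 1 2 one_le_two (hWmul 1 1 _ _ ih (hXW l))) (hXW l))
  -- single (Pi.single l c) 1 - 1 ∈ W 1
  have hsingle1 : ∀ (l : Fin m) (c : ZMod (p ^ r)),
      AddMonoidAlgebra.single (Pi.single l c : Fin m → ZMod (p ^ r)) (1 : F) - 1 ∈ W 1 := by
    intro l c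
    have h1 : AddMonoidAlgebra.single (Pi.single l c : Fin m → ZMod (p ^ r)) (1 : F)
        = (X l + 1) ^ c.val := by
      have hx1 : X l + 1
          = AddMonoidAlgebra.single (Pi.single l (1 : ZMod (p ^ r)) : Fin m → ZMod (p ^ r)) (1 : F) := by
        simp [hXdef]
      rw [hx1, AddMonoidAlgebra.single_pow, one_pow]
      congr 1
      ext j
      by_cases hj : j = l <;>
        simp [hj, Pi.single_apply, ZMod.natCast_val, ZMod.cast_id]
    rw [h1]
    exact hXpow l c.val
  -- single g 1 - 1 ∈ W 1
  have hsingleW : ∀ g : Fin m → ZMod (p ^ r),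
      AddMonoidAlgebra.single g (1 : F) - 1 ∈ W 1 := by
    intro g
    have key : ∀ s : Finset (Fin m),
        AddMonoidAlgebra.single (∑ l ∈ s, Pi.single l (g l) : Fin m → ZMod (p ^ r)) (1 : F) - 1
          ∈ W 1 := by
      intro s
      induction s using Finset.induction with
      | empty =>
        simp only [Finset.sum_empty]
        have : AddMonoidAlgebra.single (0 : Fin m → ZMod (p ^ r)) (1 : F) = 1 := rfl
        rw [this, sub_self]
        exact Submodule.zero_mem _
      | @insert a s ha ih =>
        rw [Finset.sum_insert ha]
        have hAB : ∀ A B : Fin m → ZMod (p ^ r),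
            AddMonoidAlgebra.single (A + B) (1 : F) - 1
              = (AddMonoidAlgebra.single A (1 : F) - 1) * (AddMonoidAlgebra.single B (1 : F) - 1)
                + (AddMonoidAlgebra.single A (1 : F) - 1)
                + (AddMonoidAlgebra.single B (1 : F) - 1) := by
          intro A B
          have hs : AddMonoidAlgebra.single (A + B) (1 : F)
              = AddMonoidAlgebra.single A (1 : F) * AddMonoidAlgebra.single B (1 : F) := by
            rw [AddMonoidAlgebra.single_mul_single, one_mul]
          rw [hs]; ring
        rw [hAB]
        exact add_mem
          (add_mem (hWmono 1 2 one_le_two (hWmul 1 1 _ _ (hsingle1 a (g a)) ih))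
            (hsingle1 a (g a))) ih
    have := key Finset.univ
    rwa [Finset.univ_sum_single] at this
  -- 1 ∈ W 0
  have h1W0 : (1 : AddMonoidAlgebra F (Fin m → ZMod (p ^ r))) ∈ W 0 :=
    Submodule.subset_span ⟨0, pow_pos hp.pos _, Nat.zero_le _, hV0.symm⟩
  -- W 0 = ⊤
  have hW0top : W 0 = ⊤ := by
    rw [eq_top_iff]
    rintro x -
    have hx : x = ∑ g ∈ x.coeff.support, AddMonoidAlgebra.single g (x.coeff g) := (AddMonoidAlgebra.sum_coeff_single x).symm
    rw [hx]
    apply sum_mem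
    intro g _
    have hsg : AddMonoidAlgebra.single g (x.coeff g) = (x.coeff g) • AddMonoidAlgebra.single g (1 : F) := by
      rw [AddMonoidAlgebra.smul_single', mul_one]
    rw [hsg]
    apply Submodule.smul_mem
    have : AddMonoidAlgebra.single g (1 : F)
        = (AddMonoidAlgebra.single g (1 : F) - 1) + 1 := by ring
    rw [this]
    exact add_mem (hWmono 0 1 (Nat.zero_le _) (hsingleW g)) h1W0
  -- M ≤ W 1
  have hMW1 : ∀ a : AddMonoidAlgebra F (Fin m → ZMod (p ^ r)), a ∈ M → a ∈ W 1 := by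
    intro a ha
    have hsum0 : ∑ g : Fin m → ZMod (p ^ r), a.coeff g = 0 := (hM a).mp ha
    have hzero : ∀ g ∈ Finset.univ, g ∉ a.coeff.support → AddMonoidAlgebra.single g (a.coeff g) = 0 := by
      intro g _ hg
      rw [Finsupp.notMem_support_iff.mp hg]
      exact AddMonoidAlgebra.single_zero g
    have h2 : ∑ g : Fin m → ZMod (p ^ r), AddMonoidAlgebra.single g (a.coeff g) = a :=
      ((Finset.sum_subset (Finset.subset_univ _) hzero).symm).trans (AddMonoidAlgebra.sum_coeff_single a)
    have hrep : a = ∑ g : Fin m → ZMod (p ^ r),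
        (a.coeff g) • (AddMonoidAlgebra.single g (1 : F) - 1) := by
      have h1 : ∑ g : Fin m → ZMod (p ^ r), (a.coeff g) • (AddMonoidAlgebra.single g (1 : F) - 1)
          = (∑ g : Fin m → ZMod (p ^ r), AddMonoidAlgebra.single g (a.coeff g))
            - (∑ g : Fin m → ZMod (p ^ r), a.coeff g) • (1 : AddMonoidAlgebra F (Fin m → ZMod (p ^ r))) := by
        rw [Finset.sum_smul, ← Finset.sum_sub_distrib]
        apply Finset.sum_congr rfl
        intro g _
        rw [smul_sub, AddMonoidAlgebra.smul_single', mul_one]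
      rw [h1, h2, hsum0, zero_smul, sub_zero]
    rw [hrep]
    exact sum_mem fun g _ => Submodule.smul_mem _ _ (hsingleW g)
  -- X l ∈ M
  have hXM : ∀ l : Fin m, X l ∈ M := by
    intro l
    rw [hM]
    have hsum1 : ∀ (A : Fin m → ZMod (p ^ r)),
        ∑ g : Fin m → ZMod (p ^ r), (AddMonoidAlgebra.single A (1 : F)).coeff g = 1 := by
      intro A
      have happ : ∀ g : Fin m → ZMod (p ^ r),
          (AddMonoidAlgebra.single A (1 : F)).coeff g = if A = g then (1 : F) else 0 :=
        fun g => Finsupp.single_apply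
      rw [Finset.sum_congr rfl (fun g _ => happ g), Finset.sum_ite_eq]
      simp
    have happX : ∀ g : Fin m → ZMod (p ^ r), (X l).coeff g
        = (AddMonoidAlgebra.single (Pi.single l (1 : ZMod (p ^ r)) : Fin m → ZMod (p ^ r)) (1 : F)).coeff g
          - (AddMonoidAlgebra.single (0 : Fin m → ZMod (p ^ r)) (1 : F)).coeff g := by
      intro g
      have : X l = AddMonoidAlgebra.single (Pi.single l (1 : ZMod (p ^ r)) : Fin m → ZMod (p ^ r)) (1 : F)
          - AddMonoidAlgebra.single (0 : Fin m → ZMod (p ^ r)) (1 : F) := by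
        rw [hXdef, AddMonoidAlgebra.one_def]
      rw [this]
      exact Finsupp.sub_apply _ _ _
    rw [Finset.sum_congr rfl (fun g _ => happX g), Finset.sum_sub_distrib, hsum1, hsum1, sub_self]
  -- V i ∈ M ^ (ω i)
  have hVM : ∀ i, V i ∈ M ^ (ω i) := by
    intro i
    have hclaim : ∀ s : Finset (Fin m),
        (∏ l ∈ s, X l ^ dig i (l : ℕ)) ∈ M ^ (∑ l ∈ s, dig i (l : ℕ)) := by
      intro s
      induction s using Finset.induction with
      | empty =>
        simp only [Finset.prod_empty, Finset.sum_empty, pow_zero, Ideal.one_eq_top]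
        exact Submodule.mem_top
      | @insert a s ha ih =>
        rw [Finset.prod_insert ha, Finset.sum_insert ha, pow_add]
        exact Ideal.mul_mem_mul (Ideal.pow_mem_pow (hXM a) _) ih
    have hfin : ω i = ∑ l : Fin m, dig i (l : ℕ) := by
      rw [hω'']
      exact Finset.sum_range (fun l => dig i l)
    rw [hV'' i, hfin]
    exact hclaim Finset.univ
  -- W t ≤ M ^ t
  have hWM : ∀ s, W s ≤ Submodule.restrictScalars F (M ^ s) := by
    intro s
    apply Submodule.span_le.mpr
    rintro x ⟨i, _, hi2, rfl⟩
    show V i ∈ M ^ s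
    exact Ideal.pow_le_pow_right hi2 (hVM i)
  -- M ^ t ≤ W t
  have hMW : ∀ s, Submodule.restrictScalars F (M ^ s) ≤ W s := by
    intro s
    induction s with
    | zero => rw [hW0top]; exact le_top
    | succ n ih =>
      intro x hx
      have hx' : x ∈ M ^ n * M := by
        rw [← pow_succ]
        exact hx
      exact Submodule.mul_induction_on hx'
        (fun y hy z hz => hWmul n 1 y z (ih hy) (hMW1 z hz))
        (fun y z hy hz => add_mem hy hz)
  constructor
  · -- linear independence
    have hspan_top : ⊤ ≤ Submodule.span F
        (Set.range (fun i : Fin (p ^ (r * m)) => V (i : ℕ))) := by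
      calc (⊤ : Submodule F (AddMonoidAlgebra F (Fin m → ZMod (p ^ r)))) = W 0 := hW0top.symm
        _ ≤ _ := Submodule.span_mono (by rintro x ⟨i, hi1, -, rfl⟩; exact ⟨⟨i, hi1⟩, rfl⟩)
    have hcardG : Fintype.card (Fin m → ZMod (p ^ r)) = p ^ (r * m) := by
      rw [Fintype.card_fun, ZMod.card, Fintype.card_fin, ← pow_mul]
    have hcard : Fintype.card (Fin (p ^ (r * m)))
        = Module.finrank F (AddMonoidAlgebra F (Fin m → ZMod (p ^ r))) := by
      rw [Fintype.card_fin, ← hcardG]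
      rw [(AddMonoidAlgebra.coeffLinearEquiv F).finrank_eq]
      exact (Module.finrank_finsupp_self (R := F) (ι := Fin m → ZMod (p ^ r))).symm
    have li_b : LinearIndependent F (fun i : Fin (p ^ (r * m)) => V (i : ℕ)) :=
      linearIndependent_of_top_le_span_of_card_eq_finrank hspan_top hcard
    have hinj : Function.Injective
        (fun x : {i : ℕ // i < p ^ (r * m) ∧ t ≤ ω i} => (⟨x.1, x.2.1⟩ : Fin (p ^ (r * m)))) := by
      intro x y hxy
      exact Subtype.ext (congrArg Fin.val hxy)
    have hres := li_b.comp
      (fun x : {i : ℕ // i < p ^ (r * m) ∧ t ≤ ω i} => (⟨x.1, x.2.1⟩ : Fin (p ^ (r * m)))) hinj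
    exact hres
  · exact le_antisymm (hWM t) (hMW t)

/-- With `F = F_{p^r}` and `G` the additive group of `GR(p^r, m)` (modelled as
`Fin m → ZMod (p ^ r)`), and `M` the augmentation ideal (= Jacobson radical) of `F[G]`,
for each `1 ≤ t ≤ m(p^r - 1)` the set `B_t = {V i : ω_{p^r}(i) ≥ t}` is an `F`-linear
basis of `M^t`. -/
theorem jennings_basis_radical_powers (p r m : ℕ) (hp : p.Prime) (hr : 1 ≤ r) (hm : 1 ≤ m)
    [NeZero (p ^ r)] (F : Type*) [Field F] [Fintype F] (hF : Fintype.card F = p ^ r)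
    (ω : ℕ → ℕ) (hω : ∀ i, ω i = ∑ l ∈ Finset.range m, i / p ^ (r * l) % p ^ r)
    (V : ℕ → AddMonoidAlgebra F (Fin m → ZMod (p ^ r)))
    (hV : ∀ i : ℕ, V i = ∏ l : Fin m,
        (AddMonoidAlgebra.single (Pi.single l (1 : ZMod (p ^ r)) : Fin m → ZMod (p ^ r))
            (1 : F) - 1) ^ (i / p ^ (r * (l : ℕ)) % p ^ r))
    (M : Ideal (AddMonoidAlgebra F (Fin m → ZMod (p ^ r))))
    (hM : ∀ a : AddMonoidAlgebra F (Fin m → ZMod (p ^ r)),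
      a ∈ M ↔ ∑ g : Fin m → ZMod (p ^ r), a.coeff g = 0)
    (t : ℕ) (ht1 : 1 ≤ t) (ht2 : t ≤ m * (p ^ r - 1)) :
    LinearIndependent F
        (fun i : {i : ℕ // i < p ^ (r * m) ∧ t ≤ ω i} => V i) ∧
      Submodule.span F {x | ∃ i : ℕ, i < p ^ (r * m) ∧ t ≤ ω i ∧ x = V i} =
        Submodule.restrictScalars F (M ^ t : Ideal _) := by
  have hcharF : CharP F p := by
    obtain ⟨c, hc⟩ := CharP.exists F
    haveI := hc
    obtain ⟨n, hcprime, hcard⟩ := FiniteField.card F c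
    have hpc : p = c := by
      have hdvd : p ∣ c ^ (n : ℕ) := by
        rw [← hcard, hF]
        exact dvd_pow_self p (by omega)
      exact (Nat.prime_dvd_prime_iff_eq hp hcprime).mp (hp.dvd_of_dvd_pow hdvd)
    rwa [hpc]
  haveI := hcharF
  exact jennings_aux p r m hp hr hm F ω hω V hV M hM t
end

section
/- Let F = F_{p^r} and G the additive group of GR(p^r, m). The nilpotency index of the radical M of F[G] is 1 + m(p^r − 1); that is, M^{m(p^r−1)} ≠ 0 but M^{1 + m(p^r − 1)} = 0. -/
open AddMonoidAlgebra Pointwise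

lemma auxCharF (p r : ℕ) (hp : p.Prime) (hr : 1 ≤ r) (F : Type*) [Field F] [Fintype F]
    (hF : Fintype.card F = p ^ r) : CharP F p := by
  obtain ⟨c, hc⟩ := CharP.exists F
  haveI := hc
  obtain ⟨n, hcprime, hcard⟩ := FiniteField.card F c
  have hpc : p = c := by
    have h1 : p ∣ c ^ (n : ℕ) := by
      rw [← hcard, hF]
      exact dvd_pow_self p (by omega)
    exact (Nat.prime_dvd_prime_iff_eq hp hcprime).mp (hp.dvd_of_dvd_pow h1)
  rwa [hpc]

/-- With `F = F_{p^r}` and `G` the additive group of `GR(p^r, m)` (modelled as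
`Fin m → ZMod (p ^ r)`), the nilpotency index of the radical `M` (the augmentation ideal)
of `F[G]` is `1 + m(p^r - 1)`: `M^(m(p^r-1)) ≠ 0` but `M^(1 + m(p^r-1)) = 0`. -/
theorem radical_nilpotency_index (p r m : ℕ) (hp : p.Prime) (hr : 1 ≤ r) (hm : 1 ≤ m)
    [NeZero (p ^ r)] (F : Type*) [Field F] [Fintype F] (hF : Fintype.card F = p ^ r)
    (M : Ideal (AddMonoidAlgebra F (Fin m → ZMod (p ^ r))))
    (hM : ∀ a : AddMonoidAlgebra F (Fin m → ZMod (p ^ r)),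
      a ∈ M ↔ ∑ g : Fin m → ZMod (p ^ r), a.coeff g = 0) :
    M ^ (m * (p ^ r - 1)) ≠ ⊥ ∧ M ^ (1 + m * (p ^ r - 1)) = ⊥ := by
  classical
  haveI : Fact p.Prime := ⟨hp⟩
  haveI hFp : CharP F p := auxCharF p r hp hr F hF
  have hq1 : 1 < p ^ r := by
    calc 1 < p := hp.one_lt
    _ ≤ p ^ r := Nat.le_self_pow (by omega) p
  haveI : Fact (1 < p ^ r) := ⟨hq1⟩
  haveI : CharP (AddMonoidAlgebra F (Fin m → ZMod (p ^ r))) p :=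
    charP_of_injective_ringHom (algebraMap F (AddMonoidAlgebra F (Fin m → ZMod (p ^ r)))).injective p
  -- the generators
  set t : Fin m → AddMonoidAlgebra F (Fin m → ZMod (p ^ r)) := fun i => single (Pi.single i 1) 1 - 1 with htdef
  -- coefficient sum of a single
  have hsum : ∀ (g : Fin m → ZMod (p ^ r)) (c : F), ∑ h : Fin m → ZMod (p ^ r), (single g c).coeff h = c := by
    intro g c
    rw [Finset.sum_eq_single g]
    · simp
    · intro b _ hb
      exact Finsupp.single_eq_of_ne' (fun h => hb h.symm)
    · simp
  -- membership of the generators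
  have htM : ∀ i, t i ∈ M := by
    intro i
    rw [hM]
    have : ∀ h : Fin m → ZMod (p ^ r), (t i).coeff h = (single (Pi.single i 1) (1:F)).coeff h - (single 0 (1:F)).coeff h := by
      intro h
      simp only [htdef, AddMonoidAlgebra.one_def]
      rfl
    simp only [this]
    rw [Finset.sum_sub_distrib, hsum, hsum, sub_self]
  -- the span identity
  have key : ∀ g : Fin m → ZMod (p ^ r), single g (1:F) - 1 ∈ Ideal.span (Set.range t) := by
    have hadd : ∀ g h : Fin m → ZMod (p ^ r),
        single g (1:F) - 1 ∈ Ideal.span (Set.range t) →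
        single h (1:F) - 1 ∈ Ideal.span (Set.range t) →
        single (g + h) (1:F) - 1 ∈ Ideal.span (Set.range t) := by
      intro g h hg hh
      have hmul : single (g + h) (1:F) = single g 1 * single h 1 := by
        rw [single_mul_single, one_mul]
      have : single (g + h) (1:F) - 1 =
          (single g (1:F) - 1) * single h 1 + (single h (1:F) - 1) := by
        rw [hmul]; ring
      rw [this]
      exact add_mem (Ideal.mul_mem_right _ _ hg) hh
    have hzero : single (0 : Fin m → ZMod (p ^ r)) (1:F) - 1 ∈ Ideal.span (Set.range t) := by
      rw [← AddMonoidAlgebra.one_def, sub_self]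
      exact zero_mem _
    have hnsmul : ∀ (k : ℕ) (g : Fin m → ZMod (p ^ r)),
        single g (1:F) - 1 ∈ Ideal.span (Set.range t) →
        single (k • g) (1:F) - 1 ∈ Ideal.span (Set.range t) := by
      intro k g hg
      induction k with
      | zero => simpa using hzero
      | succ n ih =>
        have : (n + 1) • g = n • g + g := by rw [add_smul, one_smul]
        rw [this]
        exact hadd _ _ ih hg
    intro g
    have hdecomp : g = ∑ i : Fin m, ((g i).val • Pi.single i (1 : ZMod (p ^ r))) := by
      have : ∀ i : Fin m, (g i).val • Pi.single i (1 : ZMod (p ^ r)) = (Pi.single i (g i) : Fin m → ZMod (p ^ r)) := by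
        intro i
        rw [← Pi.single_smul]
        congr 1
        rw [nsmul_eq_mul, mul_one, ZMod.natCast_val, ZMod.cast_id]
      simp only [this]
      exact (Finset.univ_sum_single g).symm
    have hgen : ∀ s : Finset (Fin m),
        single (∑ i ∈ s, ((g i).val • Pi.single i (1 : ZMod (p ^ r)))) (1:F) - 1 ∈
          Ideal.span (Set.range t) := by
      intro s
      induction s using Finset.induction with
      | empty => simpa using hzero
      | insert _ _ hnotmem ih =>
        rw [Finset.sum_insert hnotmem]
        refine hadd _ _ ?_ ih
        refine hnsmul _ _ ?_
        exact Ideal.subset_span ⟨_, rfl⟩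
    rw [hdecomp]
    exact hgen Finset.univ
  have hspan : M = Ideal.span (Set.range t) := by
    apply le_antisymm
    · intro a ha
      rw [hM] at ha
      have hrepr : a = ∑ g ∈ a.coeff.support, (a.coeff g) • (single g (1:F) - 1) := by
        have h1 : ∑ g ∈ a.coeff.support, (a.coeff g) • (single g (1:F) - 1)
            = (∑ g ∈ a.coeff.support, single g (a.coeff g)) - (∑ g ∈ a.coeff.support, a.coeff g) • 1 := by
          rw [Finset.sum_smul, ← Finset.sum_sub_distrib]
          refine Finset.sum_congr rfl (fun g _ => ?_)
          rw [smul_sub, AddMonoidAlgebra.smul_single', mul_one]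
        have h2 : ∑ g ∈ a.coeff.support, a.coeff g = 0 := by
          rw [← ha]
          apply Finset.sum_subset (Finset.subset_univ _)
          intro x _ hx
          exact Finsupp.notMem_support_iff.mp hx
        rw [h1, h2, zero_smul, sub_zero]
        conv_lhs => rw [← AddMonoidAlgebra.sum_coeff_single a]
        rfl
      rw [hrepr]
      exact Submodule.sum_mem _ (fun g _ => Submodule.smul_of_tower_mem _ _ (key g))
    · rw [Ideal.span_le]
      rintro x ⟨i, rfl⟩
      exact htM i
  -- nilpotency of generators
  have htq : ∀ i, t i ^ (p ^ r) = 0 := by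
    intro i
    have h1 : t i ^ (p ^ r) = single (Pi.single i 1) (1:F) ^ (p ^ r) - 1 ^ (p ^ r) := by
      rw [htdef]
      exact sub_pow_char_pow _ _ r
    rw [h1, one_pow, AddMonoidAlgebra.single_pow, one_pow]
    have h2 : ((p ^ r) • Pi.single i 1 : Fin m → ZMod (p ^ r)) = 0 := by
      ext j
      simp [Pi.single_apply, ZMod.natCast_self]
    rw [h2, ← AddMonoidAlgebra.one_def, sub_self]
  constructor
  · -- lower bound
    set I : Ideal (MvPolynomial (Fin m) F) :=
      Ideal.span (Set.range fun i : Fin m =>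
        (MvPolynomial.X i : MvPolynomial (Fin m) F) ^ (p ^ r)) with hIdef
    haveI : CharP (MvPolynomial (Fin m) F) p :=
      charP_of_injective_ringHom (MvPolynomial.C_injective (Fin m) F) p
    have hXq : ∀ i : Fin m, (Ideal.Quotient.mk I) ((1 + MvPolynomial.X i) ^ (p ^ r)) = 1 := by
      intro i
      have h1 : ((1 : MvPolynomial (Fin m) F) + MvPolynomial.X i) ^ (p ^ r)
          = 1 + (MvPolynomial.X i) ^ (p ^ r) := by
        rw [add_pow_char_pow, one_pow]
      have h2 : (Ideal.Quotient.mk I) ((MvPolynomial.X i) ^ (p ^ r)) = 0 :=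
        Ideal.Quotient.eq_zero_iff_mem.mpr (Ideal.subset_span ⟨i, rfl⟩)
      rw [h1, RingHom.map_add, RingHom.map_one, h2, add_zero]
    set v : Fin m → ZMod (p ^ r) → (MvPolynomial (Fin m) F ⧸ I) :=
      fun i a => Ideal.Quotient.mk I ((1 + MvPolynomial.X i) ^ a.val) with hvdef
    have hv : ∀ (i : Fin m) (a b : ZMod (p ^ r)), v i (a + b) = v i a * v i b := by
      intro i a b
      rw [hvdef]
      simp only
      rw [← map_mul, ← pow_add]
      have h3 : a.val + b.val = (a + b).val + (p ^ r) * ((a.val + b.val) / (p ^ r)) := by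
        rw [ZMod.val_add]
        exact (Nat.mod_add_div _ _).symm
      rw [h3, pow_add, RingHom.map_mul, pow_mul,
        RingHom.map_pow (Ideal.Quotient.mk I) ((1 + MvPolynomial.X i) ^ (p ^ r)), hXq, one_pow,
        mul_one]
    set Φ : Multiplicative (Fin m → ZMod (p ^ r)) →* (MvPolynomial (Fin m) F ⧸ I) :=
      { toFun := fun g => ∏ i : Fin m, v i (Multiplicative.toAdd g i)
        map_one' := by
          rw [hvdef]
          simp
        map_mul' := by
          intro g h
          rw [← Finset.prod_mul_distrib]
          exact Finset.prod_congr rfl fun i _ => hv i _ _ } with hPhidef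
    set ψ := AddMonoidAlgebra.lift F (MvPolynomial (Fin m) F ⧸ I) (Fin m → ZMod (p ^ r)) Φ
      with hpsidef
    have hψt : ∀ i, ψ (t i) = Ideal.Quotient.mk I (MvPolynomial.X i) := by
      intro i
      rw [htdef]
      simp only
      rw [map_sub, map_one, AddMonoidAlgebra.lift_single, one_smul]
      have h4 : Φ (Multiplicative.ofAdd (Pi.single i 1))
          = Ideal.Quotient.mk I (1 + MvPolynomial.X i) := by
        have h4' : Φ (Multiplicative.ofAdd (Pi.single i 1))
            = ∏ j : Fin m, v j ((Pi.single i 1 : Fin m → ZMod (p ^ r)) j) := rfl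
        rw [h4', Finset.prod_eq_single i]
        · rw [hvdef]
          simp only
          rw [Pi.single_eq_same, ZMod.val_one, pow_one]
        · intro j _ hj
          rw [hvdef]
          simp only
          rw [Pi.single_eq_of_ne hj, ZMod.val_zero, pow_zero, map_one]
        · intro h
          exact absurd (Finset.mem_univ i) h
      rw [h4, map_add, map_one, add_sub_cancel_left]
    set W : AddMonoidAlgebra F (Fin m → ZMod (p ^ r)) := ∏ i : Fin m, t i ^ (p ^ r - 1)
      with hWdef
    have hψW : ψ W = Ideal.Quotient.mk I
        (∏ i : Fin m, (MvPolynomial.X i : MvPolynomial (Fin m) F) ^ (p ^ r - 1)) := by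
      rw [hWdef, map_prod, map_prod]
      refine Finset.prod_congr rfl fun i _ => ?_
      rw [map_pow, hψt, map_pow]
    have hmono : ∀ s : Finset (Fin m),
        (∏ i ∈ s, (MvPolynomial.X i : MvPolynomial (Fin m) F) ^ (p ^ r - 1))
          = MvPolynomial.monomial (∑ i ∈ s, Finsupp.single i (p ^ r - 1)) 1 := by
      intro s
      induction s using Finset.induction with
      | empty => simp
      | insert _ _ hnot ih =>
        rw [Finset.prod_insert hnot, Finset.sum_insert hnot, ih,
          MvPolynomial.X_pow_eq_monomial, MvPolynomial.monomial_mul, one_mul]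
    have hP : (∏ i : Fin m, (MvPolynomial.X i : MvPolynomial (Fin m) F) ^ (p ^ r - 1)) ∉ I := by
      intro hmem
      rw [hIdef, Ideal.mem_span_range_iff_exists_fun] at hmem
      obtain ⟨c, hc⟩ := hmem
      set d : (Fin m) →₀ ℕ := ∑ j : Fin m, Finsupp.single j (p ^ r - 1) with hddef
      have hdi : ∀ i : Fin m, d i = p ^ r - 1 := by
        intro i
        rw [hddef]
        rw [Finset.sum_apply']
        rw [Finset.sum_eq_single i]
        · rw [Finsupp.single_eq_same]
        · intro j _ hj
          exact Finsupp.single_eq_of_ne' hj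
        · intro h
          exact absurd (Finset.mem_univ i) h
      have hcoeffP : MvPolynomial.coeff d
          (∏ i : Fin m, (MvPolynomial.X i : MvPolynomial (Fin m) F) ^ (p ^ r - 1)) = 1 := by
        rw [hmono Finset.univ, ← hddef, MvPolynomial.coeff_monomial, if_pos rfl]
      have hcoeff0 : MvPolynomial.coeff d
          (∑ i : Fin m, c i * (MvPolynomial.X i : MvPolynomial (Fin m) F) ^ (p ^ r)) = 0 := by
        rw [MvPolynomial.coeff_sum]
        apply Finset.sum_eq_zero
        intro i _
        rw [MvPolynomial.X_pow_eq_monomial, MvPolynomial.coeff_mul_monomial']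
        rw [if_neg]
        intro hle
        have h5 := (Finsupp.le_def.mp hle) i
        rw [Finsupp.single_eq_same, hdi i] at h5
        omega
      rw [hc, hcoeffP] at hcoeff0
      exact one_ne_zero hcoeff0
    have hWne : W ≠ 0 := by
      intro h0
      apply hP
      rw [← Ideal.Quotient.eq_zero_iff_mem, ← hψW, h0, map_zero]
    have hWmem : ∀ s : Finset (Fin m),
        (∏ i ∈ s, t i ^ (p ^ r - 1)) ∈ M ^ (s.card * (p ^ r - 1)) := by
      intro s
      induction s using Finset.induction with
      | empty => simp
      | insert a s hnot ih =>
        have hcardeq : (insert a s).card * (p ^ r - 1)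
            = (p ^ r - 1) + s.card * (p ^ r - 1) := by
          rw [Finset.card_insert_of_notMem hnot]
          ring
        rw [Finset.prod_insert hnot, hcardeq, pow_add]
        exact Ideal.mul_mem_mul (Ideal.pow_mem_pow (htM _) _) ih
    intro hbot
    have h6 := hWmem Finset.univ
    rw [Finset.card_univ, Fintype.card_fin, hbot] at h6
    rw [Submodule.mem_bot] at h6
    exact hWne h6
  · -- upper bound
    rw [hspan]
    have hpow : Ideal.span (Set.range t) ^ (1 + m * (p ^ r - 1))
        = Ideal.span (Set.range t ^ (1 + m * (p ^ r - 1))) := Submodule.span_pow _ _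
    rw [hpow, ← le_bot_iff, Ideal.span_le]
    intro x hx
    rw [Set.mem_pow] at hx
    obtain ⟨f, hf⟩ := hx
    have hchoice : ∀ j : Fin (1 + m * ((p ^ r) - 1)), ∃ i : Fin m, (f j : AddMonoidAlgebra F (Fin m → ZMod (p ^ r))) = t i := by
      intro j
      obtain ⟨i, hi⟩ := (f j).2
      exact ⟨i, hi.symm⟩
    choose gg hgg using hchoice
    have hx0 : x = ∏ j : Fin (1 + m * ((p ^ r) - 1)), t (gg j) := by
      rw [← hf, List.prod_ofFn]
      exact Finset.prod_congr rfl (fun j _ => hgg j)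
    -- pigeonhole
    have hpigeon : ∃ b ∈ Finset.univ.image gg,
        (p ^ r) ≤ (Finset.univ.filter (fun a => gg a = b)).card := by
      by_contra hcon
      push_neg at hcon
      have hcard : (Finset.univ : Finset (Fin (1 + m * ((p ^ r) - 1)))).card
          = ∑ b ∈ Finset.univ.image gg, (Finset.univ.filter (fun a => gg a = b)).card :=
        Finset.card_eq_sum_card_fiberwise (fun x _ => Finset.mem_image_of_mem gg (Finset.mem_univ x))
      have hle : ∑ b ∈ Finset.univ.image gg, (Finset.univ.filter (fun a => gg a = b)).card
          ≤ (Finset.univ.image gg).card * ((p ^ r) - 1) := by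
        calc ∑ b ∈ Finset.univ.image gg, (Finset.univ.filter (fun a => gg a = b)).card
            ≤ (Finset.univ.image gg).card • ((p ^ r) - 1) :=
              Finset.sum_le_card_nsmul _ _ _ (fun b hb => by have := hcon b hb; omega)
          _ = (Finset.univ.image gg).card * ((p ^ r) - 1) := by rw [smul_eq_mul]
      have him : (Finset.univ.image gg).card ≤ m := by
        calc (Finset.univ.image gg).card ≤ (Finset.univ : Finset (Fin m)).card :=
              Finset.card_le_card (Finset.subset_univ _)
          _ = m := by simp
      have : 1 + m * ((p ^ r) - 1) ≤ m * ((p ^ r) - 1) := by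
        calc 1 + m * ((p ^ r) - 1) = (Finset.univ : Finset (Fin (1 + m * ((p ^ r) - 1)))).card := by simp
          _ ≤ (Finset.univ.image gg).card * ((p ^ r) - 1) := by rw [hcard]; exact hle
          _ ≤ m * ((p ^ r) - 1) := Nat.mul_le_mul_right _ him
      omega
    obtain ⟨b, hb, hbcard⟩ := hpigeon
    have : x = 0 := by
      rw [hx0, Finset.prod_comp t gg]
      refine Finset.prod_eq_zero hb ?_
      have : t b ^ (Finset.univ.filter (fun a => gg a = b)).card
          = t b ^ (p ^ r) * t b ^ ((Finset.univ.filter (fun a => gg a = b)).card - (p ^ r)) := by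
        rw [← pow_add]
        congr 1
        omega
      rw [this, htq, zero_mul]
    simp [this]
end

section
/- Let F be a field of characteristic p and G an elementary abelian p-group of order p^m with basis {g_0, ..., g_{m−1}}. Then the p^m elements ∏_{ν=0}^{m−1}(X^{g_ν} − 1)^{e_ν} with 0 ≤ e_ν < p form an F-linear basis of the group algebra F[G] (the Jennings basis). -/
/-- Let `F` be a field of characteristic `p` and `G` an elementary abelian `p`-group of order
`p^m` with basis `g_0, …, g_{m-1}` (i.e. an `m`-dimensional `ZMod p`-vector space).  Then the
`p^m` elements `∏_ν (X^(g_ν) - 1)^(e_ν)` with `0 ≤ e_ν < p` form an `F`-linear basis of the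
group algebra `F[G]` (the Jennings basis). -/
theorem jennings_basis_elementary_abelian (F : Type*) [Field F] (p m : ℕ) (hp : p.Prime)
    [CharP F p] (G : Type*) [AddCommGroup G] [Module (ZMod p) G] [Fintype G]
    (b : Module.Basis (Fin m) (ZMod p) G) :
    ∃ B : Module.Basis (Fin m → Fin p) F (AddMonoidAlgebra F G),
      ∀ e : Fin m → Fin p,
        B e = ∏ ν : Fin m, (AddMonoidAlgebra.single (b ν) (1 : F) - 1) ^ ((e ν : ℕ)) := by
  haveI : NeZero p := ⟨hp.ne_zero⟩
  haveI : Fact p.Prime := ⟨hp⟩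
  haveI : Nontrivial (AddMonoidAlgebra F G) := inferInstance
  haveI : CharP (AddMonoidAlgebra F G) p :=
    charP_of_injective_algebraMap (algebraMap F (AddMonoidAlgebra F G)).injective p
  set x : Fin m → AddMonoidAlgebra F G :=
    fun ν => AddMonoidAlgebra.single (b ν) 1 - 1 with hxdef
  set f : (Fin m → Fin p) → AddMonoidAlgebra F G :=
    fun e => ∏ ν, x ν ^ (e ν : ℕ) with hfdef
  have hsp : ∀ (ν : Fin m) (n : ℕ), (AddMonoidAlgebra.single (b ν) (1:F)) ^ n
      = AddMonoidAlgebra.single ((n : ZMod p) • b ν) 1 := by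
    intro ν n
    rw [AddMonoidAlgebra.single_pow, one_pow, Nat.cast_smul_eq_nsmul]
  have hx0 : ∀ ν, x ν ^ p = 0 := by
    intro ν
    rw [hxdef]
    simp only
    rw [sub_pow_char, one_pow, hsp]
    simp [AddMonoidAlgebra.one_def]
  have key : ∀ k : Fin m → ℕ, ∏ ν, x ν ^ k ν ∈ Submodule.span F (Set.range f) := by
    intro k
    by_cases h : ∀ ν, k ν < p
    · have : ∏ ν, x ν ^ k ν = f (fun ν => ⟨k ν, h ν⟩) := rfl
      rw [this]; exact Submodule.subset_span ⟨_, rfl⟩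
    · push_neg at h
      obtain ⟨ν, hν⟩ := h
      have hz : x ν ^ k ν = 0 := by
        calc x ν ^ k ν = x ν ^ p * x ν ^ (k ν - p) := by rw [← pow_add]; congr 1; omega
        _ = 0 := by rw [hx0, zero_mul]
      rw [Finset.prod_eq_zero (Finset.mem_univ ν) hz]
      exact (Submodule.span F _).zero_mem
  have hsingle : ∀ g : G, AddMonoidAlgebra.single g (1:F) ∈ Submodule.span F (Set.range f) := by
    intro g
    have hg : AddMonoidAlgebra.single g (1:F) = ∏ ν, (x ν + 1) ^ ((b.repr g ν).val) := by
      have h1 : ∀ ν : Fin m, x ν + 1 = AddMonoidAlgebra.single (b ν) (1:F) := by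
        intro ν; simp [hxdef]
      simp_rw [h1, hsp, ZMod.natCast_val, ZMod.cast_id]
      rw [AddMonoidAlgebra.prod_single]
      rw [b.sum_repr g]
      simp
    rw [hg]
    have expand : ∀ ν : Fin m, (x ν + 1) ^ ((b.repr g ν).val) =
        ∑ kk ∈ Finset.range ((b.repr g ν).val + 1),
          x ν ^ kk * (((b.repr g ν).val.choose kk : ℕ) : AddMonoidAlgebra F G) := by
      intro ν
      rw [add_pow]
      simp
    simp_rw [expand]
    rw [Finset.prod_univ_sum]
    apply Submodule.sum_mem
    intro c hc
    have heq : ∏ ν, (x ν ^ c ν * (((b.repr g ν).val.choose (c ν) : ℕ) : AddMonoidAlgebra F G))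
        = (∏ ν, (b.repr g ν).val.choose (c ν)) • ∏ ν, x ν ^ c ν := by
      rw [Finset.prod_mul_distrib, ← Nat.cast_prod, nsmul_eq_mul, mul_comm]
    rw [heq]
    exact nsmul_mem (key _) _
  have hspan : ⊤ ≤ Submodule.span F (Set.range f) := by
    have hb := (AddMonoidAlgebra.basis G F).span_eq
    rw [show (⊤ : Submodule F (AddMonoidAlgebra F G)) =
        Submodule.span F (Set.range (AddMonoidAlgebra.basis G F)) from hb.symm]
    apply Submodule.span_le.mpr
    rintro _ ⟨g, rfl⟩
    simpa using hsingle g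
  have hcard : Fintype.card (Fin m → Fin p) = Module.finrank F (AddMonoidAlgebra F G) := by
    have h1 : Module.finrank F (AddMonoidAlgebra F G) = Fintype.card G :=
      Module.finrank_eq_card_basis
        (AddMonoidAlgebra.basis G F)
    have h2 : Fintype.card G = Fintype.card (ZMod p) ^ Fintype.card (Fin m) :=
      Module.card_fintype b
    simp [h1, h2, ZMod.card]
  refine ⟨basisOfTopLeSpanOfCardEqFinrank f hspan hcard, fun e => ?_⟩
  rw [coe_basisOfTopLeSpanOfCardEqFinrank]
end

section
/- Let F be a field of characteristic p and G an elementary abelian p-group, and let U be a finite nonempty subset of G \ {0}. Then in F[G], ∏_{g ∈ U}(X^g − 1)^{p−1} equals ∑_{h ∈ ⟨U⟩} X^h if U is linearly independent over F_p, and equals 0 otherwise. -/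
open scoped Classical
open Finset AddMonoidAlgebra

section Aux

variable {F : Type*} [Field F] {p : ℕ} [CharP F p]

lemma choose_cast_eq (hp : p.Prime) : ∀ k, k < p → (((p-1).choose k : ℕ) : F) = (-1)^k := by
  intro k
  induction k with
  | zero => simp
  | succ n ih =>
    intro hk
    have hn : n < p := Nat.lt_of_succ_lt hk
    have h1 : p.choose (n+1) = (p-1).choose n + (p-1).choose (n+1) := by
      conv_lhs => rw [← Nat.succ_pred_eq_of_pos hp.pos]
      exact Nat.choose_succ_succ _ _
    have h2 : (p : ℕ) ∣ p.choose (n+1) := hp.dvd_choose_self (Nat.succ_ne_zero n) hk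
    have h3 : ((p.choose (n+1) : ℕ) : F) = 0 := by
      obtain ⟨c, hc⟩ := h2
      simp [hc, CharP.cast_eq_zero F p]
    have h4 := congrArg (fun m : ℕ => (m : F)) h1
    simp only [Nat.cast_add] at h4
    rw [h3, ih hn] at h4
    rw [pow_succ]
    linear_combination -h4

lemma neg_one_pow_p_sub_one (hp : p.Prime) : ((-1 : F))^(p-1) = 1 := by
  rcases hp.eq_two_or_odd' with h2 | hodd
  · subst h2
    norm_num
    have h : (2 : F) = 0 := CharP.cast_eq_zero F 2
    linear_combination -h
  · exact (Nat.Odd.sub_odd hodd odd_one).neg_one_pow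

lemma neg_one_single {G : Type*} [AddCommGroup G] :
    (-1 : AddMonoidAlgebra F G) = AddMonoidAlgebra.single 0 (-1 : F) := by
  rw [AddMonoidAlgebra.one_def]
  exact (AddMonoidAlgebra.single_neg 0 (1:F)).symm

lemma geom_expand (hp : p.Prime) {G : Type*} [AddCommGroup G] [Module (ZMod p) G] (a : G) :
    (AddMonoidAlgebra.single a (1 : F) - 1) ^ (p - 1)
      = ∑ k ∈ Finset.range p, AddMonoidAlgebra.single (((k : ZMod p)) • a) (1 : F) := by
  have hx : (AddMonoidAlgebra.single a (1 : F) - 1)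
      = AddMonoidAlgebra.single a (1 : F) + (-1) := by ring
  rw [hx, add_pow]
  have hrange : p - 1 + 1 = p := Nat.succ_pred_eq_of_pos hp.pos
  rw [hrange]
  apply Finset.sum_congr rfl
  intro k hk
  rw [Finset.mem_range] at hk
  have h1 : (AddMonoidAlgebra.single a (1 : F))^k
      = AddMonoidAlgebra.single (k • a) (1 : F) := by
    rw [AddMonoidAlgebra.single_pow, one_pow]
  have hneg : ((-1 : AddMonoidAlgebra F G))^(p-1-k)
      = AddMonoidAlgebra.single 0 ((-1 : F)^(p-1-k)) := by
    rw [neg_one_single, AddMonoidAlgebra.single_pow, smul_zero]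
  have hcast : (((p-1).choose k : ℕ) : AddMonoidAlgebra F G)
      = AddMonoidAlgebra.single 0 (((p-1).choose k : ℕ) : F) :=
    AddMonoidAlgebra.natCast_def _
  rw [h1, hneg, hcast, AddMonoidAlgebra.single_mul_single, AddMonoidAlgebra.single_mul_single]
  rw [choose_cast_eq hp k hk]
  have hcoef : (1 : F) * (-1)^(p-1-k) * (-1)^k = 1 := by
    rw [one_mul, ← pow_add, Nat.sub_add_cancel (by omega)]
    exact neg_one_pow_p_sub_one hp
  rw [hcoef]
  congr 1
  simp [Nat.cast_smul_eq_nsmul]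

lemma geom_expand' (hp : p.Prime) {G : Type*} [AddCommGroup G] [Module (ZMod p) G] (a : G) :
    haveI : NeZero p := ⟨hp.ne_zero⟩
    (AddMonoidAlgebra.single a (1 : F) - 1) ^ (p - 1)
      = ∑ c : ZMod p, AddMonoidAlgebra.single (c • a) (1 : F) := by
  haveI : NeZero p := ⟨hp.ne_zero⟩
  rw [geom_expand hp a]
  refine Finset.sum_nbij' (fun k => ((k : ZMod p))) (fun c => (ZMod.val c : ℕ)) ?_ ?_ ?_ ?_ ?_
  · intro k _; exact Finset.mem_univ _
  · intro c _; exact Finset.mem_range.mpr (ZMod.val_lt c)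
  · intro k hk; exact ZMod.val_natCast_of_lt (Finset.mem_range.mp hk)
  · intro c _; simp [ZMod.natCast_val, ZMod.cast_id]
  · intro k _; rfl

end Aux

section Span

variable {F : Type*} [Field F] {p : ℕ} [CharP F p] [NeZero p]
  {G : Type*} [AddCommGroup G] [Module (ZMod p) G] [Fintype G] [DecidableEq G]

variable (F p) in
noncomputable def Sp (s : Finset G) : AddMonoidAlgebra F G :=
  ∑ h ∈ Finset.univ.filter (fun h : G => h ∈ Submodule.span (ZMod p) (s : Set G)),
    AddMonoidAlgebra.single h (1 : F)

lemma Sp_mul_T (hp : p.Prime) (s : Finset G) (a : G) (ha : a ∉ Submodule.span (ZMod p) (s : Set G)) :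
    Sp F p s * (∑ c : ZMod p, AddMonoidAlgebra.single (c • a) (1 : F))
      = Sp F p (insert a s) := by
  haveI : Fact p.Prime := ⟨hp⟩
  unfold Sp
  rw [Finset.sum_mul_sum]
  simp only [AddMonoidAlgebra.single_mul_single, one_mul]
  rw [← Finset.sum_product']
  refine Finset.sum_bij (fun x _ => x.1 + x.2 • a) ?_ ?_ ?_ ?_
  · rintro ⟨h, c⟩ hx
    rw [Finset.mem_product, Finset.mem_filter] at hx
    rw [Finset.mem_filter]
    refine ⟨Finset.mem_univ _, ?_⟩
    rw [Finset.coe_insert, Submodule.mem_span_insert]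
    exact ⟨c, h, hx.1.2, by rw [add_comm]⟩
  · rintro ⟨h₁, c₁⟩ hx₁ ⟨h₂, c₂⟩ hx₂ heq
    rw [Finset.mem_product, Finset.mem_filter] at hx₁ hx₂
    simp only at heq
    have hc : c₁ = c₂ := by
      by_contra hne
      apply ha
      have h1 : (c₁ - c₂) • a = h₂ - h₁ := by
        rw [sub_smul]
        linear_combination (norm := abel) heq
      have h2 : a = (c₁ - c₂)⁻¹ • (h₂ - h₁) := by
        rw [← h1, smul_smul, inv_mul_cancel₀ (sub_ne_zero.mpr hne), one_smul]
      rw [h2]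
      exact Submodule.smul_mem _ _ (Submodule.sub_mem _ hx₂.1.2 hx₁.1.2)
    subst hc
    have : h₁ = h₂ := by
      have := heq
      exact add_right_cancel heq
    simp [this]
  · intro b hb
    rw [Finset.mem_filter, Finset.coe_insert, Submodule.mem_span_insert] at hb
    obtain ⟨c, z, hz, hbz⟩ := hb.2
    refine ⟨(z, c), ?_, ?_⟩
    · rw [Finset.mem_product, Finset.mem_filter]
      exact ⟨⟨Finset.mem_univ _, hz⟩, Finset.mem_univ _⟩
    · simp only
      rw [hbz, add_comm]
  · rintro ⟨h, c⟩ _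
    rfl

lemma Sp_mul_single (s : Finset G) (a : G) (ha : a ∈ Submodule.span (ZMod p) (s : Set G)) :
    Sp F p s * AddMonoidAlgebra.single a (1 : F) = Sp F p s := by
  unfold Sp
  rw [Finset.sum_mul]
  simp only [AddMonoidAlgebra.single_mul_single, one_mul]
  refine Finset.sum_nbij' (fun h => h + a) (fun h => h - a) ?_ ?_ ?_ ?_ ?_
  · intro h hh
    rw [Finset.mem_filter] at hh ⊢
    exact ⟨Finset.mem_univ _, Submodule.add_mem _ hh.2 ha⟩
  · intro h hh
    rw [Finset.mem_filter] at hh ⊢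
    exact ⟨Finset.mem_univ _, Submodule.sub_mem _ hh.2 ha⟩
  · intro h _; exact add_sub_cancel_right h a
  · intro h _; exact sub_add_cancel h a
  · intro h _; rfl

end Span

section Main

variable {F : Type*} [Field F] {p : ℕ} [CharP F p]
  {G : Type*} [AddCommGroup G] [Module (ZMod p) G] [Fintype G] [DecidableEq G]

lemma main_induction (hp : p.Prime) (U : Finset G) (h0 : (0 : G) ∉ U) :
    (LinearIndependent (ZMod p) (fun x : (U : Set G) => (x : G)) →
      ∏ g ∈ U, (AddMonoidAlgebra.single g (1 : F) - 1) ^ (p - 1) = Sp F p U) ∧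
    (¬ LinearIndependent (ZMod p) (fun x : (U : Set G) => (x : G)) →
      ∏ g ∈ U, (AddMonoidAlgebra.single g (1 : F) - 1) ^ (p - 1) = 0) := by
  haveI : NeZero p := ⟨hp.ne_zero⟩
  haveI : Fact p.Prime := ⟨hp⟩
  induction U using Finset.induction_on with
  | empty =>
    constructor
    · intro _
      rw [Finset.prod_empty]
      unfold Sp
      rw [show Finset.univ.filter
          (fun h : G => h ∈ Submodule.span (ZMod p) ((∅ : Finset G) : Set G))
          = {(0 : G)} from ?_]
      · rw [Finset.sum_singleton, AddMonoidAlgebra.one_def]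
      · ext h
        simp [Submodule.mem_bot]
    · intro h
      exfalso
      apply h
      haveI : IsEmpty (((∅ : Finset G) : Set G)) := by
        rw [Finset.coe_empty]; infer_instance
      exact linearIndependent_empty_type
  | @insert a s has IH =>
    have ha0 : a ≠ 0 := fun h => h0 (h ▸ Finset.mem_insert_self a s)
    have hs0 : (0 : G) ∉ s := fun h => h0 (Finset.mem_insert_of_mem h)
    have hanotin : a ∉ (s : Set G) := by exact_mod_cast has
    obtain ⟨IH1, IH2⟩ := IH hs0
    have hprod : ∏ g ∈ insert a s, (AddMonoidAlgebra.single g (1 : F) - 1) ^ (p - 1)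
        = (AddMonoidAlgebra.single a (1 : F) - 1) ^ (p - 1)
          * ∏ g ∈ s, (AddMonoidAlgebra.single g (1 : F) - 1) ^ (p - 1) :=
      Finset.prod_insert has
    have hiff : (LinearIndependent (ZMod p)
          (fun x : ((insert a s : Finset G) : Set G) => (x : G))) ↔
        (LinearIndependent (ZMod p) (fun x : (s : Set G) => (x : G))
          ∧ a ∉ Submodule.span (ZMod p) (s : Set G)) := by
      rw [Finset.coe_insert]
      exact linearIndepOn_id_insert hanotin
    by_cases hind : LinearIndependent (ZMod p) (fun x : (s : Set G) => (x : G))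
    · by_cases hmem : a ∈ Submodule.span (ZMod p) (s : Set G)
      · constructor
        · intro hI
          exact absurd ((hiff.mp hI).2) (by simpa using hmem)
        · intro _
          rw [hprod, IH1 hind]
          have hsplit : p - 1 = (p - 2) + 1 := by have := hp.two_le; omega
          rw [hsplit, pow_succ, mul_assoc]
          have hz : (AddMonoidAlgebra.single a (1 : F) - 1) * Sp F p s = 0 := by
            rw [mul_comm, mul_sub, mul_one, Sp_mul_single s a hmem, sub_self]
          rw [hz, mul_zero]
      · constructor
        · intro _
          rw [hprod, IH1 hind, mul_comm, geom_expand' hp a]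
          exact Sp_mul_T hp s a hmem
        · intro hnI
          exact absurd (hiff.mpr ⟨hind, hmem⟩) hnI
    · have hnI : ¬ LinearIndependent (ZMod p)
          (fun x : ((insert a s : Finset G) : Set G) => (x : G)) :=
        fun hI => hind (hiff.mp hI).1
      exact ⟨fun hI => absurd hI hnI, fun _ => by rw [hprod, IH2 hind, mul_zero]⟩

end Main

open scoped Classical in
/-- Let `F` be a field of characteristic `p` and `G` an elementary abelian `p`-group
(a `ZMod p`-vector space), and `U` a finite nonempty subset of `G \ {0}`.  Then in `F[G]`,
`∏_{g ∈ U} (X^g - 1)^(p-1)` equals `∑_{h ∈ ⟨U⟩} X^h` if `U` is linearly independent over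
`F_p`, and equals `0` otherwise. -/
theorem prod_over_subset_pow (F : Type*) [Field F] (p : ℕ) (hp : p.Prime) [CharP F p]
    (G : Type*) [AddCommGroup G] [Module (ZMod p) G] [Fintype G] [DecidableEq G]
    (U : Finset G) (hU : U.Nonempty) (h0 : (0 : G) ∉ U) :
    (LinearIndependent (ZMod p) (fun x : (U : Set G) => (x : G)) →
      ∏ g ∈ U, (AddMonoidAlgebra.single g (1 : F) - 1) ^ (p - 1) =
        ∑ h ∈ Finset.univ.filter (fun h : G => h ∈ Submodule.span (ZMod p) (U : Set G)),
          AddMonoidAlgebra.single h (1 : F)) ∧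
    (¬ LinearIndependent (ZMod p) (fun x : (U : Set G) => (x : G)) →
      ∏ g ∈ U, (AddMonoidAlgebra.single g (1 : F) - 1) ^ (p - 1) = 0) := by
  exact main_induction hp U h0
end

section
/- With q = p^r and N(t) = #{k ∈ [0, q^m − 1] : ω_q(k) = t}, the dimension of the GRM code C_ν(m,q) of length q^m and order ν satisfies dim C_ν(m,q) − dim C_{ν−1}(m,q) = N(m(q−1) − ν) for 1 ≤ ν ≤ m(q−1) − 1, and dim C_0(m,q) = 1. -/
set_option synthInstance.maxHeartbeats 1000000
set_option maxHeartbeats 2000000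

section Aux
open Polynomial

lemma code_dim (Fq : Type*) [Field Fq] (n : ℕ) (hn : 0 < n) (g : Polynomial Fq)
    (hg : g.Monic) (hdvd : g ∣ X ^ n - 1) :
    Module.finrank Fq (Submodule.restrictScalars Fq
      (Ideal.span {Ideal.Quotient.mk (Ideal.span {X ^ n - 1} : Ideal (Polynomial Fq)) g}))
      + g.natDegree = n := by
  set J : Ideal (Polynomial Fq) := Ideal.span {X ^ n - 1} with hJ
  set I : Ideal (Polynomial Fq ⧸ J) := Ideal.span {Ideal.Quotient.mk J g} with hI
  have hmonicJ : (X ^ n - 1 : Polynomial Fq).Monic := by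
    simpa using monic_X_pow_sub_C (1 : Fq) hn.ne'
  -- finrank of R = n
  have hfin : FiniteDimensional Fq (Polynomial Fq ⧸ J) :=
    Module.Finite.of_basis (AdjoinRoot.powerBasis' hmonicJ).basis
  have hfrR : Module.finrank Fq (Polynomial Fq ⧸ J) = n := by
    have hdeg : ((X : Polynomial Fq) ^ n - 1).natDegree = n := by
      simpa using natDegree_X_pow_sub_C (n := n) (r := (1 : Fq))
    have := Module.finrank_eq_card_basis (AdjoinRoot.powerBasisAux' hmonicJ)
    simp [hdeg] at this
    exact this
  -- I as map of span {g}
  have hImap : I = Ideal.map (Ideal.Quotient.mkₐ Fq J) (Ideal.span {g}) := by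
    rw [hI, Ideal.map_span, Set.image_singleton]
    rfl
  -- quotient equivalence
  have hsup : J ⊔ Ideal.span {g} = Ideal.span {g} :=
    sup_eq_right.mpr (Ideal.span_singleton_le_span_singleton.mpr hdvd)
  let e1 : ((Polynomial Fq ⧸ J) ⧸ I) ≃ₐ[Fq] Polynomial Fq ⧸ (J ⊔ Ideal.span {g}) := by
    rw [hImap]
    exact DoubleQuot.quotQuotEquivQuotSupₐ Fq J (Ideal.span {g})
  let e2 : (Polynomial Fq ⧸ (J ⊔ Ideal.span {g})) ≃ₐ[Fq] Polynomial Fq ⧸ Ideal.span {g} :=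
    Ideal.quotientEquivAlgOfEq Fq hsup
  -- finrank of quotient by I
  have hfrQ : Module.finrank Fq ((Polynomial Fq ⧸ J) ⧸ I.restrictScalars Fq) = g.natDegree := by
    have e0 : ((Polynomial Fq ⧸ J) ⧸ I.restrictScalars Fq) ≃ₗ[Fq] ((Polynomial Fq ⧸ J) ⧸ I) :=
      Submodule.Quotient.restrictScalarsEquiv Fq I
    have := Module.finrank_eq_card_basis (AdjoinRoot.powerBasisAux' hg)
    rw [LinearEquiv.finrank_eq (e0.trans (e1.toLinearEquiv.trans e2.toLinearEquiv))]
    simp at this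
    exact this
  have := Submodule.finrank_quotient_add_finrank (I.restrictScalars Fq)
  rw [hfrQ, hfrR] at this
  omega

lemma digit_expand (q : ℕ) (hq : 2 ≤ q) :
    ∀ (m : ℕ) (i : ℕ), i < q ^ m → ∑ l ∈ Finset.range m, (i / q ^ l % q) * q ^ l = i := by
  intro m
  induction m with
  | zero => intro i hi; simp at hi; simp [hi]
  | succ m ih =>
    intro i hi
    have hq0 : 0 < q := by omega
    have hdiv : i / q < q ^ m := by
      rw [Nat.div_lt_iff_lt_mul hq0]; rw [pow_succ] at hi; exact hi
    have key := ih (i / q) hdiv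
    rw [Finset.sum_range_succ']
    have h2 : ∀ l, (i / q ^ (l + 1) % q) * q ^ (l + 1) = ((i / q) / q ^ l % q * q ^ l) * q := by
      intro l
      rw [Nat.div_div_eq_div_mul, ← pow_succ']
      ring
    simp only [h2]
    rw [← Finset.sum_mul, key]
    simp only [pow_zero, Nat.div_one, mul_one]
    rw [mul_comm]
    exact Nat.div_add_mod i q

lemma geom_aux (q : ℕ) (hq : 2 ≤ q) (m : ℕ) :
    ∑ l ∈ Finset.range m, (q - 1) * q ^ l = q ^ m - 1 := by
  induction m with
  | zero => simp
  | succ m ih =>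
    rw [Finset.sum_range_succ, ih, pow_succ, Nat.sub_mul, one_mul]
    have h1 : 1 ≤ q ^ m := Nat.one_le_pow _ _ (by omega)
    have h2 : q ^ m ≤ q ^ m * q := Nat.le_mul_of_pos_right _ (by omega)
    have h3 : q ^ m * q = q * q ^ m := mul_comm _ _
    omega

lemma digit_le (q : ℕ) (hq : 2 ≤ q) (m i : ℕ) :
    ∑ l ∈ Finset.range m, i / q ^ l % q ≤ m * (q - 1) := by
  calc ∑ l ∈ Finset.range m, i / q ^ l % q ≤ ∑ _l ∈ Finset.range m, (q - 1) :=
        Finset.sum_le_sum (fun l _ => by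
          have := Nat.mod_lt (i / q ^ l) (show 0 < q by omega); omega)
    _ = m * (q - 1) := by simp [Finset.sum_const, mul_comm]

lemma digit_pos (q : ℕ) (hq : 2 ≤ q) (m i : ℕ) (hi : i < q ^ m) (h0 : i ≠ 0) :
    0 < ∑ l ∈ Finset.range m, i / q ^ l % q := by
  set l := Nat.log q i with hl
  have h1 : q ^ l ≤ i := Nat.pow_log_le_self q h0
  have h2 : i < q ^ (l + 1) := Nat.lt_pow_succ_log_self (by omega) i
  have hlm : l < m := by
    by_contra h
    exact absurd hi (not_lt.mpr (le_trans (Nat.pow_le_pow_right (by omega) (not_lt.mp h)) h1))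
  have hterm : 0 < i / q ^ l % q := by
    have hd1 : 1 ≤ i / q ^ l := (Nat.one_le_div_iff (Nat.pow_pos (by omega))).mpr h1
    have hd2 : i / q ^ l < q := by
      rw [Nat.div_lt_iff_lt_mul (Nat.pow_pos (by omega))]
      rw [pow_succ] at h2
      have h3 : q ^ l * q = q * q ^ l := mul_comm _ _
      omega
    rw [Nat.mod_eq_of_lt hd2]; exact hd1
  exact lt_of_lt_of_le hterm (Finset.single_le_sum (f := fun l => i / q ^ l % q)
    (fun _ _ => Nat.zero_le _) (Finset.mem_range.mpr hlm))

lemma digit_max_iff (q : ℕ) (hq : 2 ≤ q) (m i : ℕ) (hi : i < q ^ m) :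
    (∑ l ∈ Finset.range m, i / q ^ l % q) = m * (q - 1) ↔ i = q ^ m - 1 := by
  have hle : ∀ l ∈ Finset.range m, i / q ^ l % q ≤ q - 1 := fun l _ => by
    have := Nat.mod_lt (i / q ^ l) (show 0 < q by omega); omega
  have hconst : ∑ _l ∈ Finset.range m, (q - 1) = m * (q - 1) := by
    simp [Finset.sum_const, mul_comm]
  constructor
  · intro h
    have hall := (Finset.sum_eq_sum_iff_of_le hle).mp (by rw [h, hconst])
    have := digit_expand q hq m i hi
    rw [← this]
    calc ∑ l ∈ Finset.range m, (i / q ^ l % q) * q ^ l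
        = ∑ l ∈ Finset.range m, (q - 1) * q ^ l :=
          Finset.sum_congr rfl (fun l hl => by rw [hall l hl])
      _ = q ^ m - 1 := geom_aux q hq m
  · rintro rfl
    have hexp := digit_expand q hq m (q ^ m - 1) hi
    have hle' : ∀ l ∈ Finset.range m, ((q ^ m - 1) / q ^ l % q) * q ^ l ≤ (q - 1) * q ^ l :=
      fun l hl => Nat.mul_le_mul_right _ (hle l hl)
    have hsum : ∑ l ∈ Finset.range m, ((q ^ m - 1) / q ^ l % q) * q ^ l
        = ∑ l ∈ Finset.range m, (q - 1) * q ^ l := by rw [hexp, geom_aux q hq m]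
    have hall := (Finset.sum_eq_sum_iff_of_le hle').mp hsum
    calc ∑ l ∈ Finset.range m, (q ^ m - 1) / q ^ l % q
        = ∑ _l ∈ Finset.range m, (q - 1) := Finset.sum_congr rfl (fun l hl => by
          have h := hall l hl
          have hpos : 0 < q ^ l := Nat.pow_pos (by omega)
          exact Nat.eq_of_mul_eq_mul_right hpos h)
      _ = m * (q - 1) := hconst

lemma prod_monic_deg {K : Type*} [Field K] (S : Finset ℕ) (c : ℕ → K) :
    (∏ i ∈ S, (X - C (c i))).Monic ∧ (∏ i ∈ S, (X - C (c i))).natDegree = S.card := by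
  refine ⟨monic_prod_of_monic _ _ (fun i _ => monic_X_sub_C _), ?_⟩
  rw [natDegree_prod_of_monic _ _ (fun i _ => monic_X_sub_C _)]
  simp

lemma prod_dvd_X_pow_sub_one {K : Type*} [Field K] [Fintype K] [DecidableEq K] (γ : Kˣ)
    (hγ : ∀ u : Kˣ, u ∈ Subgroup.zpowers γ) (S : Finset ℕ)
    (hS : ∀ i ∈ S, i < Fintype.card K - 1) :
    (∏ i ∈ S, (X - C ((γ : K) ^ i))) ∣ X ^ (Fintype.card K - 1) - 1 := by
  set n := Fintype.card K - 1 with hn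
  have hcard : Fintype.card Kˣ = n := Fintype.card_units (α := K)
  have hn0 : 0 < n := hcard ▸ Fintype.card_pos
  have horder : orderOf ((γ : K)) = n := by
    rw [orderOf_units, orderOf_eq_card_of_forall_mem_zpowers hγ, Nat.card_eq_fintype_card, hcard]
  have hprim : IsPrimitiveRoot ((γ : K)) n := horder ▸ IsPrimitiveRoot.orderOf ((γ : K))
  have hinj : Set.InjOn (fun i => (γ : K) ^ i) ↑S := fun a ha b hb hab =>
    pow_injOn_Iio_orderOf (by simpa [horder] using hS a ha)
      (by simpa [horder] using hS b hb) hab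
  rw [show (∏ i ∈ S, (X - C ((γ : K) ^ i)))
      = ∏ u ∈ S.image (fun i => (γ : K) ^ i), (X - C u) from
    (Finset.prod_image (f := fun u => X - C u) (g := fun i => (γ : K) ^ i) (fun a ha b hb => hinj ha hb)).symm]
  rw [X_pow_sub_one_eq_prod hn0 hprim]
  apply Finset.prod_dvd_prod_of_subset
  intro u hu
  obtain ⟨i, hi, rfl⟩ := Finset.mem_image.mp hu
  rw [mem_nthRootsFinset hn0, ← pow_mul, mul_comm, pow_mul]
  rw [← horder] at *
  simp [pow_orderOf_eq_one]

end Aux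

/-- With `q = p^r` and `N(t) = #{k ∈ [0, q^m-1] : ω_q(k) = t}`, the dimension of the GRM
code `C_ν(m,q)` of length `q^m` and order `ν` satisfies
`dim C_ν(m,q) - dim C_{ν-1}(m,q) = N(m(q-1) - ν)` for `1 ≤ ν ≤ m(q-1)-1`, and
`dim C_0(m,q) = 1`.  Here `C_ν(m,q) = φ(HC_ν(m,q))` where `HC_ν(m,q)` is generated by
`f_ν(z) = ∏_{0<ω_q(i)≤m(q-1)-ν-1}(z - γ^i)` in `F_q[Z]/(Z^(q^m-1)-1)` and `φ` is the
injective extension map into `F_q[G]`, `G` the additive group of `GR(p^r,m)`. -/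
theorem GRM_dimension_differences (p r m q : ℕ) (hp : p.Prime) (hr : 1 ≤ r) (hm : 1 ≤ m)
    (hq : q = p ^ r) [NeZero q]
    (Fq : Type*) [Field Fq] [Fintype Fq] (hFq : Fintype.card Fq = q)
    (K : Type*) [Field K] [Fintype K] (hK : Fintype.card K = q ^ m) [Algebra Fq K]
    (γ : Kˣ) (hγ : ∀ u : Kˣ, u ∈ Subgroup.zpowers γ)
    (ω : ℕ → ℕ) (hω : ∀ i, ω i = ∑ l ∈ Finset.range m, i / q ^ l % q)
    (N : ℕ → ℕ)
    (hN : ∀ t, N t = ((Finset.range (q ^ m)).filter (fun k => ω k = t)).card)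
    (g : Fin (q ^ m - 1) → (Fin m → ZMod q)) (hginj : Function.Injective g)
    (hgsurj : ∀ x : Fin m → ZMod q, x ≠ 0 → ∃ i, g i = x)
    (φ : (Polynomial Fq ⧸ (Ideal.span {Polynomial.X ^ (q ^ m - 1) - 1} :
            Ideal (Polynomial Fq))) →ₗ[Fq] AddMonoidAlgebra Fq (Fin m → ZMod q))
    (hφinj : Function.Injective φ)
    (hφ : ∀ f : Polynomial Fq, f.natDegree < q ^ m - 1 →
      φ (Ideal.Quotient.mk _ f) =
        AddMonoidAlgebra.single (0 : Fin m → ZMod q)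
            (-(∑ i ∈ Finset.range (q ^ m - 1), f.coeff i)) +
          ∑ i : Fin (q ^ m - 1), AddMonoidAlgebra.single (g i) (f.coeff (i : ℕ)))
    (Fpoly : ℕ → Polynomial Fq)
    (hFpoly : ∀ k, (Fpoly k).map (algebraMap Fq K) =
      ∏ i ∈ (Finset.range (q ^ m)).filter
          (fun i => 0 < ω i ∧ ω i ≤ m * (q - 1) - k - 1),
        (Polynomial.X - Polynomial.C ((γ : K) ^ i)))
    (Code : ℕ → Submodule Fq (AddMonoidAlgebra Fq (Fin m → ZMod q)))
    (hCode : ∀ k, Code k = Submodule.map φ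
      (Submodule.restrictScalars Fq (Ideal.span {Ideal.Quotient.mk _ (Fpoly k)}))) :
    (∀ ν : ℕ, 1 ≤ ν → ν ≤ m * (q - 1) - 1 →
        Module.finrank Fq (Code ν) - Module.finrank Fq (Code (ν - 1)) =
          N (m * (q - 1) - ν)) ∧
      Module.finrank Fq (Code 0) = 1 := by
  classical
  have hq2 : 2 ≤ q := by
    have h2 : 2 ≤ p := hp.two_le
    calc 2 ≤ p := h2
      _ ≤ p ^ r := Nat.le_self_pow (by omega) p
      _ = q := hq.symm
  have hqm : 2 ≤ q ^ m := le_trans hq2 (Nat.le_self_pow (by omega) q)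
  have hmq1 : 1 ≤ m * (q - 1) := Nat.mul_pos (by omega) (by omega)
  set Sk : ℕ → Finset ℕ := fun k => (Finset.range (q ^ m)).filter
      (fun i => 0 < ω i ∧ ω i ≤ m * (q - 1) - k - 1) with hSk
  -- the key dimension computation
  have hdim : ∀ k, Module.finrank Fq (Code k) + (Sk k).card = q ^ m - 1 := by
    intro k
    have hinjK : Function.Injective (algebraMap Fq K) := (algebraMap Fq K).injective
    have hmono := prod_monic_deg (Sk k) (fun i => (γ : K) ^ i)
    have hmonic : (Fpoly k).Monic :=
      Polynomial.monic_of_injective hinjK (by rw [hFpoly k]; exact hmono.1)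
    have hdeg : (Fpoly k).natDegree = (Sk k).card := by
      rw [← Polynomial.natDegree_map_eq_of_injective hinjK, hFpoly k]
      exact hmono.2
    have hSbound : ∀ i ∈ Sk k, i < Fintype.card K - 1 := by
      intro i hi
      rw [hSk, Finset.mem_filter, Finset.mem_range] at hi
      obtain ⟨hilt, hpos, hub⟩ := hi
      have hne : i ≠ q ^ m - 1 := by
        intro hie
        have := (digit_max_iff q hq2 m i hilt).mpr hie
        rw [← hω i] at this
        omega
      omega
    have hdvdK := prod_dvd_X_pow_sub_one γ hγ (Sk k) hSbound
    rw [hK] at hdvdK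
    have hdvd : Fpoly k ∣ Polynomial.X ^ (q ^ m - 1) - 1 := by
      rw [← Polynomial.map_dvd_map' (algebraMap Fq K), hFpoly k]
      have : (Polynomial.X ^ (q ^ m - 1) - 1 : Polynomial Fq).map (algebraMap Fq K)
          = Polynomial.X ^ (q ^ m - 1) - 1 := by
        simp [Polynomial.map_sub, Polynomial.map_pow]
      rw [this]
      exact hdvdK
    have hcd := code_dim Fq (q ^ m - 1) (by omega) (Fpoly k) hmonic hdvd
    have hfr : Module.finrank Fq (Code k) = Module.finrank Fq
        (Submodule.restrictScalars Fq (Ideal.span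
          {Ideal.Quotient.mk (Ideal.span {Polynomial.X ^ (q ^ m - 1) - 1} :
            Ideal (Polynomial Fq)) (Fpoly k)})) := by
      rw [hCode k]
      exact (LinearEquiv.finrank_eq (Submodule.equivMapOfInjective φ hφinj _)).symm
    rw [hfr]
    omega
  constructor
  · intro ν hν1 hν2
    set t := m * (q - 1) - ν with ht
    have ht1 : 1 ≤ t := by omega
    have hA : m * (q - 1) - (ν - 1) - 1 = t := by omega
    have hB : m * (q - 1) - ν - 1 = t - 1 := by omega
    have hsub : Sk ν ⊆ Sk (ν - 1) := by
      intro i hi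
      simp only [hSk, Finset.mem_filter, Finset.mem_range] at hi ⊢
      exact ⟨hi.1, hi.2.1, by omega⟩
    have hsd : Sk (ν - 1) \ Sk ν = (Finset.range (q ^ m)).filter (fun i => ω i = t) := by
      ext i
      simp only [hSk, Finset.mem_sdiff, Finset.mem_filter, Finset.mem_range, hA, hB,
        not_and, not_le, not_lt]
      constructor
      · rintro ⟨⟨h1, h2, h3⟩, h4⟩
        refine ⟨h1, ?_⟩
        by_contra hne
        have := h4 h1
        omega
      · rintro ⟨h1, h2⟩
        exact ⟨⟨h1, by omega, by omega⟩, fun _ => by omega⟩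
    have hcards : (Sk (ν - 1)).card = (Sk ν).card + N t := by
      have h1 := Finset.card_sdiff_of_subset hsub
      have h2 : (Sk ν).card ≤ (Sk (ν - 1)).card := Finset.card_le_card hsub
      rw [hsd, ← hN t] at h1
      omega
    have d1 := hdim ν
    have d2 := hdim (ν - 1)
    omega
  · -- ν = 0 case
    have hcard0 : (Sk 0).card = q ^ m - 2 := by
      have hset : Sk 0 = Finset.range (q ^ m) \ {0, q ^ m - 1} := by
        ext i
        simp only [hSk, Finset.mem_filter, Finset.mem_range, Finset.mem_sdiff,
          Finset.mem_insert, Finset.mem_singleton, not_or]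
        constructor
        · rintro ⟨h1, h2, h3⟩
          refine ⟨h1, ?_, ?_⟩
          · rintro rfl
            rw [hω 0] at h2
            simp at h2
          · intro hie
            have := (digit_max_iff q hq2 m i h1).mpr hie
            rw [← hω i] at this
            omega
        · rintro ⟨h1, h2, h3⟩
          refine ⟨h1, ?_, ?_⟩
          · have := digit_pos q hq2 m i h1 h2
            rw [← hω i] at this
            exact this
          · have hle := digit_le q hq2 m i
            rw [← hω i] at hle
            have hne : ω i ≠ m * (q - 1) := by
              intro he
              exact h3 ((digit_max_iff q hq2 m i h1).mp (by rw [← hω i, he]))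
            omega
      rw [hset, Finset.card_sdiff_of_subset]
      · rw [Finset.card_range, Finset.card_pair (by omega)]
      · intro x hx
        simp only [Finset.mem_insert, Finset.mem_singleton] at hx
        rcases hx with rfl | rfl <;> simp [Finset.mem_range] <;> omega
    have d0 := hdim 0
    omega
end
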